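/- arXiv:1502.02520 — 4 statements merged into one kernel-verified Lean document; each statement's English description precedes it below -/
import Mathlib

section
/- Let M be a connected cycle-free partial order and let r ∈ M be a point fixed by every automorphism of M. Then the relation ≤_T of the T(M) construction is a partial order on the underlying set of M, r ≤_T s holds for every s ∈ M, and ⟨M, ≤_T⟩ is a tree: every two elements have a common lower bound and, for every t, the set {s : s ≤_T t} is linearly ordered by ≤_T. -/
open Set FirstOrder

universe u v

/-! ## Dedekind–MacNeille completion, connecting sets, paths, CFPOs -/

/-- The Dedekind–MacNeille completion of a partial order `M`, realized as the
collection of subsets `A ⊆ M` with `A = lowerBounds (upperBounds A)`, ordered by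
inclusion (inherited from `Set M`). -/
abbrev DMcut (M : Type*) [PartialOrder M] : Type _ :=
  {A : Set M // lowerBounds (upperBounds A) = A}

/-- The canonical embedding of `M` into its Dedekind–MacNeille completion,
`a ↦ {x | x ≤ a}`. -/
def toDM {M : Type*} [PartialOrder M] (a : M) : DMcut M :=
  ⟨{x | x ≤ a}, by
    apply subset_antisymm
    · intro z hz
      exact hz fun x hx => hx
    · intro z hz y hy
      exact le_trans hz (hy (le_refl a))⟩

/-- `c 0, …, c (n-1)` is a connecting set from `a` to `b` (0-indexed version of
Warren's definition). -/
structure IsConnSet {M : Type*} [PartialOrder M] (a b : M) (n : ℕ) (c : ℕ → DMcut M) : Prop where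
  two_le : 2 ≤ n
  first : c 0 = toDM a
  last : c (n - 1) = toDM b
  comp : ∀ i, i < n - 1 → c i ≤ c (i + 1) ∨ c (i + 1) ≤ c i
  alt : ∀ i, 0 < i → i < n - 1 →
    (c (i - 1) < c i ∧ c (i + 1) < c i) ∨ (c i < c (i - 1) ∧ c i < c (i + 1))

/-- The closed order-interval between two (comparable) points of the completion. -/
def betweenSet {M : Type*} [PartialOrder M] (x y : DMcut M) : Set (DMcut M) :=
  {z | (x ≤ z ∧ z ≤ y) ∨ (y ≤ z ∧ z ≤ x)}

/-- `σ` is a maximal chain of the subset `S`. -/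
def IsMaxChainIn {α : Type*} [Preorder α] (S σ : Set α) : Prop :=
  σ ⊆ S ∧ IsChain (· ≤ ·) σ ∧
    ∀ σ' : Set α, σ' ⊆ S → IsChain (· ≤ ·) σ' → σ ⊆ σ' → σ' = σ

/-- `P` is a path from `a` to `b` in `M` (computed in the Dedekind–MacNeille
completion of `M`). -/
def IsPath {M : Type*} [PartialOrder M] (a b : M) (P : Set (DMcut M)) : Prop :=
  ∃ (n : ℕ) (c : ℕ → DMcut M) (σ : ℕ → Set (DMcut M)),
    IsConnSet a b n c ∧
    (∀ k, k < n - 1 →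
      IsMaxChainIn (betweenSet (c k) (c (k + 1))) (σ k) ∧ c k ∈ σ k ∧ c (k + 1) ∈ σ k) ∧
    (∀ i j, i < j → j < n - 1 → ∀ x, x ∈ σ i → x ∈ σ j → j = i + 1 ∧ x = c j) ∧
    P = ⋃ k ∈ Finset.range (n - 1), σ k

/-- `M` is a cycle-free partial order: between any two points there is at most one path. -/
def IsCFPO (M : Type*) [PartialOrder M] : Prop :=
  ∀ (a b : M) (P Q : Set (DMcut M)), IsPath a b P → IsPath a b Q → P = Q

/-- `M` is connected: between any two points there is a path. -/
def PathConn (M : Type*) [PartialOrder M] : Prop :=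
  ∀ a b : M, ∃ P, IsPath a b P

/-- `s` belongs to every path from `a` to `b`; when `M` is a connected CFPO this
says exactly that `s` lies on the unique path `⟨a,b⟩`. -/
def memPath {M : Type*} [PartialOrder M] (s a b : M) : Prop :=
  ∀ P, IsPath a b P → toDM s ∈ P

/-! ## The `T(M)` construction -/

/-- The tree order of the `T(M)` construction: `s ≤_T t` iff `s ∈ ⟨r,t⟩`. -/
def leT {M : Type*} [PartialOrder M] (r s t : M) : Prop := memPath s r t

/-- Auxiliary recursion computing `((X_n, Y_n), ⋃_{i ≤ n} (X_i ∪ Y_i))`. -/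
def XYaux {M : Type*} [PartialOrder M] (r : M) : ℕ → (Set M × Set M) × Set M
  | 0 => (({t | r ≤ t}, {t | t < r}), {t | r ≤ t} ∪ {t | t < r})
  | n + 1 =>
    let p := XYaux r n
    let Xn : Set M := {t | ∃ y ∈ p.1.2, y ≤ t} \ p.2
    let Yn : Set M := {t | ∃ x ∈ p.1.1, t < x} \ p.2
    ((Xn, Yn), p.2 ∪ Xn ∪ Yn)

/-- The set `X_n` of the `T(M)` construction. -/
def Xset {M : Type*} [PartialOrder M] (r : M) (n : ℕ) : Set M := (XYaux r n).1.1

/-- The set `Y_n` of the `T(M)` construction. -/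
def Yset {M : Type*} [PartialOrder M] (r : M) (n : ℕ) : Set M := (XYaux r n).1.2

/-- The set `X = ⋃ X_n`; the predicate `U` of the `T(M)` construction holds at `t`
iff `t ∈ Xfull r`. -/
def Xfull {M : Type*} [PartialOrder M] (r : M) : Set M := ⋃ n, Xset r n

/-! ## Automorphism groups, trees, treelike CFPOs -/

/-- The group of colour-preserving order-automorphisms of a coloured partial
order, as a subgroup of the symmetric group. -/
def colouredAut (M : Type*) [PartialOrder M] {C : Type*} (χ : M → C) :
    Subgroup (Equiv.Perm M) where
  carrier := {f | (∀ s t : M, f s ≤ f t ↔ s ≤ t) ∧ ∀ s, χ (f s) = χ s}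
  one_mem' := ⟨fun _ _ => Iff.rfl, fun _ => rfl⟩
  mul_mem' := by
    rintro f g ⟨hf1, hf2⟩ ⟨hg1, hg2⟩
    refine ⟨fun s t => ?_, fun s => ?_⟩
    · simpa [Equiv.Perm.mul_apply] using (hf1 (g s) (g t)).trans (hg1 s t)
    · simpa [Equiv.Perm.mul_apply] using (hf2 (g s)).trans (hg2 s)
  inv_mem' := by
    rintro f ⟨hf1, hf2⟩
    refine ⟨fun s t => ?_, fun s => ?_⟩
    · rw [← hf1 (f⁻¹ s) (f⁻¹ t)]
      simp
    · have := hf2 (f⁻¹ s)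
      simpa using this.symm

/-- The group of all order-automorphisms of a partial order, as a subgroup of
the symmetric group (the trivial colouring). -/
def orderAutGroup (M : Type*) [PartialOrder M] : Subgroup (Equiv.Perm M) :=
  colouredAut M fun _ => (PUnit.unit : PUnit.{1})

/-- A tree: every two elements have a common lower bound and every
initial segment `{s : s ≤ t}` is linearly ordered. -/
def IsTree (T : Type*) [PartialOrder T] : Prop :=
  (∀ s t : T, ∃ w, w ≤ s ∧ w ≤ t) ∧
    ∀ t a b : T, a ≤ t → b ≤ t → a ≤ b ∨ b ≤ a

/-- A coloured partial order is treelike if there is a coloured tree whose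
(colour-preserving) automorphism group is abstractly isomorphic to its own. -/
def Treelike {M : Type u} [PartialOrder M] {C : Type v} (χ : M → C) : Prop :=
  ∃ (T : Type (max u v)) (instT : PartialOrder T) (D : Type (max u v)) (ψ : T → D),
    @IsTree T instT ∧ Nonempty (colouredAut M χ ≃* @colouredAut T instT D ψ)

/-! ## The alternating chain `Alt` and its finite/one-sided variants -/

/-- Points of `Alt` within an index set `S ⊆ ℤ`, ordered so that odd indices are
valleys and even indices are peaks, with no other strict comparabilities. -/
structure AltSub (S : Set ℤ) : Type where
  val : ℤ
  mem : val ∈ S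

instance (S : Set ℤ) : PartialOrder (AltSub S) where
  le a b := a.val = b.val ∨ (Even b.val ∧ (a.val = b.val - 1 ∨ a.val = b.val + 1))
  le_refl a := Or.inl rfl
  le_trans a b c hab hbc := by
    rcases hab with h1 | ⟨⟨r, hr⟩, h1⟩
    · rcases hbc with h2 | ⟨he2, h2⟩
      · exact Or.inl (h1.trans h2)
      · exact Or.inr ⟨he2, by omega⟩
    · rcases hbc with h2 | ⟨⟨s, hs⟩, h2⟩
      · exact Or.inr ⟨⟨r, by omega⟩, by omega⟩
      · omega
  le_antisymm a b hab hba := by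
    have hv : a.val = b.val := by
      rcases hab with h1 | ⟨⟨r, hr⟩, h1⟩
      · exact h1
      · rcases hba with h2 | ⟨⟨s, hs⟩, h2⟩ <;> omega
    cases a; cases b; simp_all

/-- The two-sided alternating chain `Alt`. -/
abbrev AltZ : Type := AltSub Set.univ

/-- `Alt_n`, the restriction of `Alt` to `{a_0, …, a_{n-1}}`. -/
abbrev AltN (n : ℕ) : Type := AltSub {z | 0 ≤ z ∧ z < (n : ℤ)}

/-- `Alt_ω`, the restriction of `Alt` to `{a_i : i ≥ 0}`. -/
abbrev AltOmega : Type := AltSub {z | 0 ≤ z}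

/-- `P` embeds into `M` as an induced suborder. -/
def EmbedsIn (P M : Type*) [PartialOrder P] [PartialOrder M] : Prop :=
  Nonempty (P ↪o M)

/-- `M` is a `CFPO_n`: one of `Alt_n`, `Alt_n*` embeds but neither `Alt_{n+1}`
nor `Alt_{n+1}*` does. -/
def IsCFPOIndex (n : ℕ) (M : Type*) [PartialOrder M] : Prop :=
  (EmbedsIn (AltN n) M ∨ EmbedsIn (AltN n)ᵒᵈ M) ∧
    ¬EmbedsIn (AltN (n + 1)) M ∧ ¬EmbedsIn (AltN (n + 1))ᵒᵈ M

/-- `M` is a `CFPO_ω`: one of `Alt_ω`, `Alt_ω*` embeds but `Alt` does not. -/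
def IsCFPOomega (M : Type*) [PartialOrder M] : Prop :=
  (EmbedsIn AltOmega M ∨ EmbedsIn AltOmegaᵒᵈ M) ∧ ¬EmbedsIn AltZ M

/-! ## Wreath products, regular trees, dendromorphic groups -/

/-- The action of `H` on `S → G` by permuting coordinates. -/
def wreathConj (G : Type*) [Group G] (S : Type*) (H : Type*) [Group H] [MulAction H S] :
    H →* MulAut (S → G) where
  toFun h :=
    { toFun := fun f s => f (h⁻¹ • s)
      invFun := fun f s => f (h • s)
      left_inv := fun f => by funext s; simp
      right_inv := fun f => by funext s; simp
      map_mul' := fun f g => rfl }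
  map_one' := by
    ext f s
    simp
  map_mul' h₁ h₂ := by
    ext f s
    simp [mul_smul]

/-- The wreath product `G ≀_S H`: the semidirect product of `∏_{s ∈ S} G` by `H`,
acting by permuting the coordinates. -/
abbrev Wreath (G : Type*) [Group G] (S : Type*) (H : Type*) [Group H] [MulAction H S] :
    Type _ :=
  SemidirectProduct (S → G) H (wreathConj G S H)

/-- `ℤ ≀ ℤ₂`, with `ℤ₂` acting on a two-element set. -/
abbrev ZwrZ2 : Type := Wreath (Multiplicative ℤ) (Fin 2) (Equiv.Perm (Fin 2))

/-- `Sym(ω)`. -/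
abbrev SymOmega : Type := Equiv.Perm ℕ

/-- `Sym(ω) ≀ ℤ₂`, with `ℤ₂` acting on a two-element set. -/
abbrev SymWrZ2 : Type := Wreath (Equiv.Perm ℕ) (Fin 2) (Equiv.Perm (Fin 2))

/-- The ramification class at `x` of an element `y > x`. -/
def ramClass {T : Type*} [PartialOrder T] (x y : T) : Set T :=
  {z | x < z ∧ ∃ w, x < w ∧ w ≤ y ∧ w ≤ z}

/-- The set of ramification classes at `x`. -/
def ramClasses {T : Type*} [PartialOrder T] (x : T) : Set (Set T) :=
  {A | ∃ y, x < y ∧ A = ramClass x y}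

/-- A regular tree. -/
def IsRegularTree (T : Type*) [PartialOrder T] : Prop :=
  (∀ c d : Set T, IsMaxChain (· ≤ ·) c → IsMaxChain (· ≤ ·) d → Nonempty (c ≃o d)) ∧
    (∀ c : Set T, IsMaxChain (· ≤ ·) c → c.Finite ∨ Nonempty (c ≃o ℕ)) ∧
    (∀ x : T, (∃ y, x < y) → (ramClasses x).Finite ∧ 2 ≤ (ramClasses x).ncard) ∧
    ∀ x y : T, Cardinal.mk {t | t ≤ x} = Cardinal.mk {t | t ≤ y} →
      Cardinal.mk (ramClasses x) = Cardinal.mk (ramClasses y)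

/-- A group is a dendromorphic factor if it is isomorphic to `ℤ ≀ ℤ₂`, `Sym(ω)`,
`Sym(ω) ≀ ℤ₂`, or the automorphism group of a regular tree. -/
def IsDendroFactor (K : Type*) [Group K] : Prop :=
  Nonempty (K ≃* ZwrZ2) ∨ Nonempty (K ≃* SymOmega) ∨ Nonempty (K ≃* SymWrZ2) ∨
    ∃ (T : Type u) (instT : PartialOrder T),
      @IsTree T instT ∧ @IsRegularTree T instT ∧
        Nonempty (K ≃* @orderAutGroup T instT)

/-- A dendromorphic group: a Cartesian product of a nonempty family of
dendromorphic factors. -/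
def IsDendromorphic (K : Type*) [Group K] : Prop :=
  ∃ (ι : Type u) (F : ι → GrpCat.{u}), Nonempty ι ∧
    (∀ i : ι, IsDendroFactor.{u} (F i)) ∧ Nonempty (K ≃* ((i : ι) → F i))

section Helpers

variable {M : Type*} [PartialOrder M]

lemma toDM_le_iff {a b : M} : toDM a ≤ toDM b ↔ a ≤ b := by
  constructor
  · intro h
    exact h (le_refl a)
  · intro h x hx
    exact le_trans hx h

lemma toDM_inj {a b : M} (h : toDM a = toDM b) : a = b :=
  le_antisymm (toDM_le_iff.1 h.le) (toDM_le_iff.1 h.ge)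

lemma betweenSet_comm (x y : DMcut M) : betweenSet x y = betweenSet y x := by
  ext z
  exact or_comm

lemma betweenSet_self (x : DMcut M) : betweenSet x x = {x} := by
  ext z
  constructor
  · rintro (⟨h1, h2⟩ | ⟨h1, h2⟩) <;> exact le_antisymm h2 h1
  · rintro rfl
    exact Or.inl ⟨le_rfl, le_rfl⟩

lemma mem_between_of_le {x y z : DMcut M} (hxy : x ≤ y) (hz : z ∈ betweenSet x y) :
    x ≤ z ∧ z ≤ y := by
  rcases hz with ⟨h1, h2⟩ | ⟨h1, h2⟩
  · exact ⟨h1, h2⟩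
  · exact ⟨le_trans hxy h1, le_trans h2 hxy⟩

lemma mem_between_of_ge {x y z : DMcut M} (hyx : y ≤ x) (hz : z ∈ betweenSet x y) :
    y ≤ z ∧ z ≤ x :=
  mem_between_of_le hyx (betweenSet_comm x y ▸ hz)

lemma left_mem_between {x y : DMcut M} (h : x ≤ y ∨ y ≤ x) : x ∈ betweenSet x y := by
  rcases h with h | h
  · exact Or.inl ⟨le_rfl, h⟩
  · exact Or.inr ⟨h, le_rfl⟩

lemma right_mem_between {x y : DMcut M} (h : x ≤ y ∨ y ≤ x) : y ∈ betweenSet x y := by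
  rcases h with h | h
  · exact Or.inl ⟨h, le_rfl⟩
  · exact Or.inr ⟨le_rfl, h⟩

lemma chain_comparable {σ : Set (DMcut M)} (h : IsChain (· ≤ ·) σ) {a b : DMcut M}
    (ha : a ∈ σ) (hb : b ∈ σ) : a ≤ b ∨ b ≤ a := by
  rcases eq_or_ne a b with rfl | hne
  · exact Or.inl le_rfl
  · exact h ha hb hne

lemma maxChainIn_singleton (x : DMcut M) : IsMaxChainIn (betweenSet x x) {x} := by
  refine ⟨by rw [betweenSet_self], Set.Subsingleton.isChain Set.subsingleton_singleton, ?_⟩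
  intro σ' h1 _ h3
  apply Set.Subset.antisymm _ h3
  intro z hz
  have := h1 hz
  rwa [betweenSet_self] at this

lemma mem_between_or {x y z w : DMcut M} (hxy : x ≤ y ∨ y ≤ x)
    (hz : z ∈ betweenSet x y) (hw : w ∈ betweenSet x y) (hzw : z ≤ w ∨ w ≤ z) :
    z ∈ betweenSet x w ∨ w ∈ betweenSet x z := by
  rcases hxy with h | h
  · have hz' := mem_between_of_le h hz
    have hw' := mem_between_of_le h hw
    rcases hzw with h2 | h2
    · exact Or.inl (Or.inl ⟨hz'.1, h2⟩)
    · exact Or.inr (Or.inl ⟨hw'.1, h2⟩)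
  · have hz' := mem_between_of_ge h hz
    have hw' := mem_between_of_ge h hw
    rcases hzw with h2 | h2
    · exact Or.inr (Or.inr ⟨h2, hw'.2⟩)
    · exact Or.inl (Or.inr ⟨h2, hz'.2⟩)

lemma splitMax {x y s : DMcut M} {σ : Set (DMcut M)} (hcomp : x ≤ y ∨ y ≤ x)
    (h : IsMaxChainIn (betweenSet x y) σ) (hs : s ∈ σ) :
    IsMaxChainIn (betweenSet x s) (σ ∩ betweenSet x s) := by
  obtain ⟨hsub, hch, hmax⟩ := h
  refine ⟨Set.inter_subset_right, hch.mono Set.inter_subset_left, ?_⟩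
  intro σ'' h1 h2 h3
  rcases hcomp with hxy | hyx
  · have hb : ∀ z ∈ σ, x ≤ z ∧ z ≤ y := fun z hz => mem_between_of_le hxy (hsub hz)
    have hxs : x ≤ s := (hb s hs).1
    have hsy : s ≤ y := (hb s hs).2
    set τ := σ'' ∪ {w ∈ σ | s ≤ w} with hτ
    have hτsub : τ ⊆ betweenSet x y := by
      rintro z (hz | ⟨hz, hsz⟩)
      · obtain ⟨h4, h5⟩ := mem_between_of_le hxs (h1 hz)
        exact Or.inl ⟨h4, le_trans h5 hsy⟩
      · exact hsub hz
    have hτch : IsChain (· ≤ ·) τ := by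
      rintro a (ha | ⟨ha, hsa⟩) b (hb' | ⟨hb', hsb⟩) hne
      · exact h2 ha hb' hne
      · exact Or.inl (le_trans (mem_between_of_le hxs (h1 ha)).2 hsb)
      · exact Or.inr (le_trans (mem_between_of_le hxs (h1 hb')).2 hsa)
      · exact hch ha hb' hne
    have hστ : σ ⊆ τ := by
      intro w hw
      rcases eq_or_ne w s with rfl | hne
      · exact Or.inl (h3 ⟨hw, Or.inl ⟨hxs, le_rfl⟩⟩)
      rcases hch hw hs hne with hws | hsw
      · exact Or.inl (h3 ⟨hw, Or.inl ⟨(hb w hw).1, hws⟩⟩)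
      · exact Or.inr ⟨hw, hsw⟩
    have hτσ : τ = σ := hmax τ hτsub hτch hστ
    apply Set.Subset.antisymm _ h3
    intro z hz
    exact ⟨hτσ ▸ (Or.inl hz : z ∈ τ), h1 hz⟩
  · have hb : ∀ z ∈ σ, y ≤ z ∧ z ≤ x := fun z hz => mem_between_of_ge hyx (hsub hz)
    have hsx : s ≤ x := (hb s hs).2
    have hys : y ≤ s := (hb s hs).1
    set τ := σ'' ∪ {w ∈ σ | w ≤ s} with hτ
    have hτsub : τ ⊆ betweenSet x y := by
      rintro z (hz | ⟨hz, hsz⟩)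
      · obtain ⟨h4, h5⟩ := mem_between_of_ge hsx (h1 hz)
        exact Or.inr ⟨le_trans hys h4, h5⟩
      · exact hsub hz
    have hτch : IsChain (· ≤ ·) τ := by
      rintro a (ha | ⟨ha, hsa⟩) b (hb' | ⟨hb', hsb⟩) hne
      · exact h2 ha hb' hne
      · exact Or.inr (le_trans hsb (mem_between_of_ge hsx (h1 ha)).1)
      · exact Or.inl (le_trans hsa (mem_between_of_ge hsx (h1 hb')).1)
      · exact hch ha hb' hne
    have hστ : σ ⊆ τ := by
      intro w hw
      rcases eq_or_ne w s with rfl | hne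
      · exact Or.inl (h3 ⟨hw, Or.inr ⟨le_rfl, hsx⟩⟩)
      rcases hch hw hs hne with hws | hsw
      · exact Or.inr ⟨hw, hws⟩
      · exact Or.inl (h3 ⟨hw, Or.inr ⟨hsw, (hb w hw).2⟩⟩)
    have hτσ : τ = σ := hmax τ hτsub hτch hστ
    apply Set.Subset.antisymm _ h3
    intro z hz
    exact ⟨hτσ ▸ (Or.inl hz : z ∈ τ), h1 hz⟩

lemma headSplit {a b s : M} {n : ℕ} {c : ℕ → DMcut M} {σ : ℕ → Set (DMcut M)} {k : ℕ}
    (hcs : IsConnSet a b n c)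
    (hσ : ∀ j, j < n - 1 → IsMaxChainIn (betweenSet (c j) (c (j + 1))) (σ j) ∧
      c j ∈ σ j ∧ c (j + 1) ∈ σ j)
    (hsep : ∀ i j, i < j → j < n - 1 → ∀ x, x ∈ σ i → x ∈ σ j → j = i + 1 ∧ x = c j)
    (hk : k < n - 1) (hs : toDM s ∈ σ k) :
    IsPath a s ((⋃ i ∈ Finset.range k, σ i) ∪ (σ k ∩ betweenSet (c k) (toDM s))) := by
  have hn2 : 2 ≤ n := hcs.two_le
  by_cases hdeg : toDM s = c k
  · rcases Nat.eq_zero_or_pos k with hk0 | hkpos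
    · subst hk0
      refine ⟨2, fun _ => toDM s, fun _ => {toDM s}, ?_, ?_, ?_, ?_⟩
      · refine ⟨le_rfl, ?_, ?_, fun i _ => Or.inl le_rfl,
          fun i h1 h2 => absurd h2 (by omega)⟩
        · show toDM s = toDM a
          rw [hdeg]; exact hcs.first
        · rfl
      · intro j hj
        exact ⟨maxChainIn_singleton (toDM s), rfl, rfl⟩
      · intro i j hij hj x _ _
        omega
      · have hc0 : c 0 ∈ σ 0 := (hσ 0 hk).2.1
        rw [show (⋃ i ∈ Finset.range 0, σ i) = (∅ : Set (DMcut M)) by simp,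
          Set.empty_union, hdeg, betweenSet_self,
          Set.inter_eq_self_of_subset_right (Set.singleton_subset_iff.2 hc0)]
        simp
    · refine ⟨k + 1, c, σ, ?_, ?_, ?_, ?_⟩
      · exact ⟨by omega, hcs.first, by simpa using hdeg.symm,
          fun i hi => hcs.comp i (by omega), fun i h0 hi => hcs.alt i h0 (by omega)⟩
      · exact fun j hj => hσ j (by omega)
      · exact fun i j hij hj x h1 h2 => hsep i j hij (by omega) x h1 h2
      · have hck : c k ∈ σ (k - 1) := by
          have := (hσ (k - 1) (by omega)).2.2
          rwa [show k - 1 + 1 = k by omega] at this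
        simp only [show k + 1 - 1 = k by omega]
        apply Set.Subset.antisymm
        · rintro x (hx | ⟨hx1, hx2⟩)
          · exact hx
          · rw [hdeg, betweenSet_self] at hx2
            rw [hx2]
            exact Set.mem_biUnion (Finset.mem_range.2 (by omega : k - 1 < k)) hck
        · intro x hx
          exact Or.inl hx
  · have hmc := (hσ k hk).1
    have hckσ := (hσ k hk).2.1
    have hcomp_k := hcs.comp k hk
    have hsbet : toDM s ∈ betweenSet (c k) (c (k + 1)) := hmc.1 hs
    have hcks : c k ≤ toDM s ∨ toDM s ≤ c k := by
      rcases hsbet with ⟨h1, h2⟩ | ⟨h1, h2⟩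
      exacts [Or.inl h1, Or.inr h2]
    set c' : ℕ → DMcut M := fun i => if i ≤ k then c i else toDM s with hc'
    set σ' : ℕ → Set (DMcut M) :=
      fun j => if j < k then σ j else σ k ∩ betweenSet (c k) (toDM s) with hσ'
    have hc'eq : ∀ i, i ≤ k → c' i = c i := fun i hi => by simp [hc', hi]
    have hc'top : ∀ i, k < i → c' i = toDM s := fun i hi => by
      simp [hc', Nat.not_le.2 hi]
    have hσ'lt : ∀ j, j < k → σ' j = σ j := fun j hj => by simp [hσ', hj]
    have hσ'k : σ' k = σ k ∩ betweenSet (c k) (toDM s) := by simp [hσ']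
    refine ⟨k + 2, c', σ', ?_, ?_, ?_, ?_⟩
    · constructor
      · omega
      · rw [hc'eq 0 (by omega)]
        exact hcs.first
      · rw [show k + 2 - 1 = k + 1 by omega, hc'top (k + 1) (by omega)]
      · intro i hi
        rcases Nat.lt_or_ge i k with hik | hik
        · rw [hc'eq i (by omega), hc'eq (i + 1) (by omega)]
          exact hcs.comp i (by omega)
        · have hieq : i = k := by omega
          subst hieq
          rw [hc'eq i le_rfl, hc'top (i + 1) (by omega)]
          exact hcks
      · intro i h0 hi
        rcases Nat.lt_or_ge i k with hik | hik
        · rw [hc'eq (i - 1) (by omega), hc'eq i (by omega), hc'eq (i + 1) (by omega)]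
          exact hcs.alt i h0 (by omega)
        · have hieq : i = k := by omega
          subst hieq
          rw [hc'eq (i - 1) (by omega), hc'eq i le_rfl, hc'top (i + 1) (by omega)]
          rcases hcs.alt i h0 hk with ⟨h1, h2⟩ | ⟨h1, h2⟩
          · exact Or.inl ⟨h1, lt_of_le_of_ne (mem_between_of_ge h2.le hsbet).2 hdeg⟩
          · exact Or.inr ⟨h1, lt_of_le_of_ne (mem_between_of_le h2.le hsbet).1
              (fun hh => hdeg hh.symm)⟩
    · intro j hj
      rcases Nat.lt_or_ge j k with hjk | hjk
      · rw [hσ'lt j hjk, hc'eq j (by omega), hc'eq (j + 1) (by omega)]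
        exact hσ j (by omega)
      · have hjeq : j = k := by omega
        subst hjeq
        rw [hσ'k, hc'eq j le_rfl, hc'top (j + 1) (by omega)]
        exact ⟨splitMax hcomp_k hmc hs, ⟨hckσ, left_mem_between hcks⟩,
          ⟨hs, right_mem_between hcks⟩⟩
    · intro i j hij hj x hxi hxj
      have hik : i < k := by omega
      rw [hσ'lt i hik] at hxi
      rcases Nat.lt_or_ge j k with hjk | hjk
      · rw [hσ'lt j hjk] at hxj
        obtain ⟨he, hx⟩ := hsep i j hij (by omega) x hxi hxj
        exact ⟨he, by rw [hc'eq j (by omega)]; exact hx⟩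
      · have hjeq : j = k := by omega
        subst hjeq
        rw [hσ'k] at hxj
        obtain ⟨he, hx⟩ := hsep i j hik hk x hxi hxj.1
        exact ⟨he, by rw [hc'eq j le_rfl]; exact hx⟩
    · ext x
      simp only [Set.mem_union, Set.mem_iUnion, Finset.mem_range, exists_prop]
      constructor
      · rintro (⟨i, hik, hxi⟩ | hx)
        · exact ⟨i, by omega, by rw [hσ'lt i hik]; exact hxi⟩
        · exact ⟨k, by omega, by rw [hσ'k]; exact hx⟩
      · rintro ⟨j, hj, hxj⟩
        rcases Nat.lt_or_ge j k with hjk | hjk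
        · rw [hσ'lt j hjk] at hxj
          exact Or.inl ⟨j, hjk, hxj⟩
        · have hjeq : j = k := by omega
          subst hjeq
          rw [hσ'k] at hxj
          exact Or.inr hxj

lemma endSplit {a b s : M} {n : ℕ} {c : ℕ → DMcut M} {σ : ℕ → Set (DMcut M)} {k : ℕ}
    (hcs : IsConnSet a b n c)
    (hσ : ∀ j, j < n - 1 → IsMaxChainIn (betweenSet (c j) (c (j + 1))) (σ j) ∧
      c j ∈ σ j ∧ c (j + 1) ∈ σ j)
    (hsep : ∀ i j, i < j → j < n - 1 → ∀ x, x ∈ σ i → x ∈ σ j → j = i + 1 ∧ x = c j)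
    (hk : k < n - 1) (hs : toDM s ∈ σ k)
    (hb : toDM b ∈ (⋃ i ∈ Finset.range k, σ i) ∪ (σ k ∩ betweenSet (c k) (toDM s))) :
    s = b := by
  have hn2 : 2 ≤ n := hcs.two_le
  have hblast : toDM b ∈ σ (n - 2) := by
    have := (hσ (n - 2) (by omega)).2.2
    rwa [show n - 2 + 1 = n - 1 by omega, hcs.last] at this
  have key : ∀ i, i < n - 2 → toDM b ∈ σ i → False := by
    intro i hi hxi
    obtain ⟨hji, hxc⟩ := hsep i (n - 2) hi (by omega) (toDM b) hxi hblast
    have halt := hcs.alt (n - 2) (by omega) (by omega)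
    rw [show n - 2 + 1 = n - 1 by omega, hcs.last, ← hxc] at halt
    rcases halt with ⟨-, h2⟩ | ⟨-, h2⟩ <;> exact absurd h2 (lt_irrefl _)
  rcases hb with hb | ⟨hb1, hb2⟩
  · simp only [Set.mem_iUnion, Finset.mem_range, exists_prop] at hb
    obtain ⟨i, hik, hxi⟩ := hb
    exact (key i (by omega) hxi).elim
  · rcases Nat.lt_or_ge k (n - 2) with hkn | hkn
    · exact (key k hkn hb1).elim
    · have hkeq : k = n - 2 := by omega
      subst hkeq
      have hsbet : toDM s ∈ betweenSet (c (n - 2)) (c (n - 2 + 1)) := (hσ (n - 2) hk).1.1 hs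
      rw [show n - 2 + 1 = n - 1 by omega, hcs.last] at hsbet
      have hcomp := hcs.comp (n - 2) hk
      rw [show n - 2 + 1 = n - 1 by omega, hcs.last] at hcomp
      apply toDM_inj
      rcases hcomp with hle | hge
      · have h1 := mem_between_of_le hle hsbet
        rcases hb2 with ⟨h2, h3⟩ | ⟨h2, h3⟩
        · exact le_antisymm h1.2 h3
        · exact le_antisymm h2 (le_trans h3 h1.1)
      · have h1 := mem_between_of_ge hge hsbet
        rcases hb2 with ⟨h2, h3⟩ | ⟨h2, h3⟩
        · exact le_antisymm (le_trans h1.2 h2) h3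
        · exact le_antisymm h2 h1.1

lemma start_mem_of_isPath {a b : M} {P : Set (DMcut M)} (hP : IsPath a b P) : toDM a ∈ P := by
  obtain ⟨n, c, σ, hcs, hσ, hsep, rfl⟩ := hP
  have hn2 : 2 ≤ n := hcs.two_le
  have h0 : 0 < n - 1 := by omega
  have := (hσ 0 h0).2.1
  rw [hcs.first] at this
  exact Set.mem_biUnion (Finset.mem_range.2 h0) this

lemma end_mem_of_isPath {a b : M} {P : Set (DMcut M)} (hP : IsPath a b P) : toDM b ∈ P := by
  obtain ⟨n, c, σ, hcs, hσ, hsep, rfl⟩ := hP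
  have hn2 : 2 ≤ n := hcs.two_le
  have h0 : n - 2 < n - 1 := by omega
  have := (hσ (n - 2) h0).2.2
  rw [show n - 2 + 1 = n - 1 by omega, hcs.last] at this
  exact Set.mem_biUnion (Finset.mem_range.2 h0) this

lemma split_of_mem {a b s : M} {P : Set (DMcut M)} (hP : IsPath a b P) (hs : toDM s ∈ P) :
    ∃ Q, IsPath a s Q ∧ Q ⊆ P ∧ (toDM b ∈ Q → s = b) := by
  obtain ⟨n, c, σ, hcs, hσ, hsep, rfl⟩ := hP
  simp only [Set.mem_iUnion, Finset.mem_range, exists_prop] at hs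
  obtain ⟨k, hk, hsk⟩ := hs
  refine ⟨_, headSplit hcs hσ hsep hk hsk, ?_, fun hb => endSplit hcs hσ hsep hk hsk hb⟩
  rintro x (hx | hx)
  · simp only [Set.mem_iUnion, Finset.mem_range, exists_prop] at hx
    obtain ⟨i, hik, hxi⟩ := hx
    exact Set.mem_biUnion (Finset.mem_range.2 (by omega)) hxi
  · exact Set.mem_biUnion (Finset.mem_range.2 hk) hx.1

end Helpers

/-- `≤_T` is a partial order on `M`, `r` is its least element, and
`⟨M, ≤_T⟩` is a tree. -/
theorem stmt2 {M : Type*} [PartialOrder M] (hM : IsCFPO M) (hconn : PathConn M)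
    (r : M) (hr : ∀ φ : M ≃o M, φ r = r) :
    (∀ s : M, leT r s s) ∧
      (∀ s t u : M, leT r s t → leT r t u → leT r s u) ∧
      (∀ s t : M, leT r s t → leT r t s → s = t) ∧
      (∀ s : M, leT r r s) ∧
      (∀ s t : M, ∃ w, leT r w s ∧ leT r w t) ∧
      (∀ t s₁ s₂ : M, leT r s₁ t → leT r s₂ t → leT r s₁ s₂ ∨ leT r s₂ s₁) := by
  have hrefl : ∀ s : M, leT r s s := fun s P hP => end_mem_of_isPath hP
  have hleast : ∀ s : M, leT r r s := fun s P hP => start_mem_of_isPath hP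
  refine ⟨hrefl, ?_, ?_, hleast, fun s t => ⟨r, hleast s, hleast t⟩, ?_⟩
  · intro s t u hst htu P hP
    obtain ⟨Q, hQ, hQP, -⟩ := split_of_mem hP (htu P hP)
    exact hQP (hst Q hQ)
  · intro s t hst hts
    obtain ⟨P, hP⟩ := hconn r t
    obtain ⟨Q, hQ, -, hend⟩ := split_of_mem hP (hst P hP)
    exact hend (hts Q hQ)
  · intro t s₁ s₂ h1 h2
    obtain ⟨P, hP⟩ := hconn r t
    have hm1 : toDM s₁ ∈ P := h1 P hP
    have hm2 : toDM s₂ ∈ P := h2 P hP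
    obtain ⟨n, c, σ, hcs, hσ, hsep, hPeq⟩ := hP
    rw [hPeq] at hm1 hm2
    simp only [Set.mem_iUnion, Finset.mem_range, exists_prop] at hm1 hm2
    obtain ⟨k₁, hk₁, hs₁⟩ := hm1
    obtain ⟨k₂, hk₂, hs₂⟩ := hm2
    have main : ∀ (u v : M) (ku kv : ℕ), ku < n - 1 → kv < n - 1 →
        toDM u ∈ σ ku → toDM v ∈ σ kv →
        (ku < kv ∨ (ku = kv ∧ toDM u ∈ betweenSet (c kv) (toDM v))) → leT r u v := by
      intro u v ku kv hku hkv hu hv hcase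
      have hQ := headSplit hcs hσ hsep hkv hv
      intro P' hP'
      rw [hM r v P' _ hP' hQ]
      rcases hcase with hlt | ⟨heq, hbet⟩
      · exact Or.inl (Set.mem_biUnion (Finset.mem_range.2 hlt) hu)
      · exact Or.inr ⟨heq ▸ hu, hbet⟩
    rcases Nat.lt_trichotomy k₁ k₂ with h | h | h
    · exact Or.inl (main s₁ s₂ k₁ k₂ hk₁ hk₂ hs₁ hs₂ (Or.inl h))
    · subst h
      have hcc := chain_comparable ((hσ k₁ hk₁).1.2.1) hs₁ hs₂
      rcases mem_between_or (hcs.comp k₁ hk₁) ((hσ k₁ hk₁).1.1 hs₁)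
          ((hσ k₁ hk₁).1.1 hs₂) hcc with hb | hb
      · exact Or.inl (main s₁ s₂ k₁ k₁ hk₁ hk₁ hs₁ hs₂ (Or.inr ⟨rfl, hb⟩))
      · exact Or.inr (main s₂ s₁ k₁ k₁ hk₁ hk₁ hs₂ hs₁ (Or.inr ⟨rfl, hb⟩))
    · exact Or.inr (main s₂ s₁ k₂ k₁ hk₂ hk₁ hs₂ hs₁ (Or.inl h))
end

section
/- Let M be a connected cycle-free partial order and let r ∈ M be a point fixed by every automorphism of M. Then every order-automorphism φ of ⟨M, ≤_M⟩ maps each set X_n of the T(M) construction onto X_n and each set Y_n onto Y_n. -/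
open Set FirstOrder

universe u v

/-- If membership in a set is invariant under an order-isomorphism, the image of the
set under the isomorphism is the set itself. -/
lemma image_eq_of_mem_iff {M : Type*} [PartialOrder M] (φ : M ≃o M) (S : Set M)
    (h : ∀ t, φ t ∈ S ↔ t ∈ S) : φ '' S = S := by
  ext x
  constructor
  · rintro ⟨t, ht, rfl⟩
    exact (h t).mpr ht
  · intro hx
    exact ⟨φ.symm x, (h (φ.symm x)).mp (by simpa using hx), by simp⟩

/-- every order-automorphism of `M` maps each `X_n` onto `X_n` and
each `Y_n` onto `Y_n`. -/
theorem stmt6 {M : Type*} [PartialOrder M] (hM : IsCFPO M) (hconn : PathConn M)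
    (r : M) (hr : ∀ φ : M ≃o M, φ r = r) (φ : M ≃o M) :
    (∀ n : ℕ, φ '' Xset r n = Xset r n) ∧ ∀ n : ℕ, φ '' Yset r n = Yset r n := by
  have hrr : φ r = r := hr φ
  have key : ∀ n : ℕ, (∀ t : M, φ t ∈ (XYaux r n).1.1 ↔ t ∈ (XYaux r n).1.1) ∧
      (∀ t : M, φ t ∈ (XYaux r n).1.2 ↔ t ∈ (XYaux r n).1.2) ∧
      (∀ t : M, φ t ∈ (XYaux r n).2 ↔ t ∈ (XYaux r n).2) := by
    intro n
    induction n with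
    | zero =>
      refine ⟨fun t => ?_, fun t => ?_, fun t => ?_⟩
      · show r ≤ φ t ↔ r ≤ t
        conv_lhs => rw [← hrr]
        exact φ.le_iff_le
      · show φ t < r ↔ t < r
        conv_lhs => rw [← hrr]
        exact φ.lt_iff_lt
      · show φ t ∈ {s : M | r ≤ s} ∪ {s : M | s < r} ↔ t ∈ _ ∪ _
        simp only [Set.mem_union, Set.mem_setOf_eq]
        constructor
        · rintro (h | h)
          · left; rw [← hrr] at h; exact φ.le_iff_le.mp h
          · right; rw [← hrr] at h; exact φ.lt_iff_lt.mp h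
        · rintro (h | h)
          · left; rw [← hrr]; exact φ.le_iff_le.mpr h
          · right; rw [← hrr]; exact φ.lt_iff_lt.mpr h
    | succ n ih =>
      obtain ⟨ihX, ihY, ihZ⟩ := ih
      have hX : ∀ t : M, φ t ∈ (XYaux r (n + 1)).1.1 ↔ t ∈ (XYaux r (n + 1)).1.1 := by
        intro t
        show ((∃ y ∈ (XYaux r n).1.2, y ≤ φ t) ∧ φ t ∉ (XYaux r n).2) ↔
          ((∃ y ∈ (XYaux r n).1.2, y ≤ t) ∧ t ∉ (XYaux r n).2)
        rw [not_iff_not.mpr (ihZ t)]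
        refine and_congr_left' ⟨?_, ?_⟩
        · rintro ⟨y, hy, hle⟩
          refine ⟨φ.symm y, ?_, ?_⟩
          · rw [← ihY (φ.symm y)]; simpa using hy
          · have := φ.symm.le_iff_le.mpr hle
            simpa using this
        · rintro ⟨y, hy, hle⟩
          exact ⟨φ y, (ihY y).mpr hy, φ.le_iff_le.mpr hle⟩
      have hY : ∀ t : M, φ t ∈ (XYaux r (n + 1)).1.2 ↔ t ∈ (XYaux r (n + 1)).1.2 := by
        intro t
        show ((∃ x ∈ (XYaux r n).1.1, φ t < x) ∧ φ t ∉ (XYaux r n).2) ↔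
          ((∃ x ∈ (XYaux r n).1.1, t < x) ∧ t ∉ (XYaux r n).2)
        rw [not_iff_not.mpr (ihZ t)]
        refine and_congr_left' ⟨?_, ?_⟩
        · rintro ⟨x, hx, hlt⟩
          refine ⟨φ.symm x, ?_, ?_⟩
          · rw [← ihX (φ.symm x)]; simpa using hx
          · have := φ.symm.lt_iff_lt.mpr hlt
            simpa using this
        · rintro ⟨x, hx, hlt⟩
          exact ⟨φ x, (ihX x).mpr hx, φ.lt_iff_lt.mpr hlt⟩
      refine ⟨hX, hY, fun t => ?_⟩
      show φ t ∈ (XYaux r n).2 ∪ _ ∪ _ ↔ t ∈ (XYaux r n).2 ∪ _ ∪ _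
      simp only [Set.mem_union]
      rw [ihZ t]
      exact or_congr (or_congr Iff.rfl (hX t)) (hY t)
  exact ⟨fun n => image_eq_of_mem_iff φ _ (key n).1,
    fun n => image_eq_of_mem_iff φ _ (key n).2.1⟩
end

section
/- Let M be a cycle-free partial order into which Alt does not embed. Then every subset of M which, with the induced order, is isomorphic to Alt_ω or to Alt_ω* is contained in a maximal such subset, i.e. a subset A ⊆ M isomorphic to Alt_ω or Alt_ω* that is not properly contained in any subset of M isomorphic to Alt_ω or Alt_ω*. -/
open Set FirstOrder

universe u v

/-- `A ⊆ M`, with the induced order, is a copy of `Alt_ω` or of `Alt_ω*`. -/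
def IsAltOmegaCopy {M : Type*} [PartialOrder M] (A : Set M) : Prop :=
  Nonempty (AltOmega ≃o A) ∨ Nonempty (AltOmegaᵒᵈ ≃o A)

namespace Stmt14Aux

/-- the alternating order relation on ℤ -/
def zalt (i j : ℤ) : Prop := i = j ∨ (Even j ∧ (i = j - 1 ∨ i = j + 1))

lemma zalt_iff {i j : ℤ} : zalt i j ↔ (i = j ∨ (j % 2 = 0 ∧ (i = j - 1 ∨ i = j + 1))) := by
  unfold zalt; rw [Int.even_iff]

def zaltB : Bool → ℤ → ℤ → Prop
  | false, i, j => zalt i j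
  | true, i, j => zalt j i

lemma altsub_le_iff {S : Set ℤ} {a b : AltSub S} : a ≤ b ↔ zalt a.val b.val := Iff.rfl

lemma AltSub.ext' {S : Set ℤ} {a b : AltSub S} (h : a.val = b.val) : a = b := by
  cases a; cases b; cases h; rfl

variable {M : Type*} [PartialOrder M]

def Spec (e : ℕ → M) (ε : Bool) : Prop := ∀ i j : ℕ, e i ≤ e j ↔ zaltB ε (i : ℤ) (j : ℤ)

lemma Spec.inj {e : ℕ → M} {ε} (he : Spec e ε) : Function.Injective e := by
  intro i j h
  have h1 := (he i j).1 (le_of_eq h)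
  have h2 := (he j i).1 (le_of_eq h.symm)
  cases ε <;> simp only [zaltB] at h1 h2 <;> rw [zalt_iff] at h1 h2 <;> omega

lemma Spec.adj' {e : ℕ → M} {ε} (he : Spec e ε) (n : ℕ) :
    e n ≤ e (n + 1) ∨ e (n + 1) ≤ e n := by
  rw [he n (n + 1), he (n + 1) n]
  cases ε <;> simp only [zaltB] <;> rw [zalt_iff, zalt_iff] <;> push_cast <;> omega

lemma Spec.adj {e : ℕ → M} {ε} (he : Spec e ε) {i j : ℕ}
    (hij : e i ≤ e j ∨ e j ≤ e i) (hne : i ≠ j) : i + 1 = j ∨ j + 1 = i := by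
  rw [he i j, he j i] at hij
  cases ε <;> simp only [zaltB] at hij <;> rw [zalt_iff, zalt_iff] at hij <;> omega

lemma copy_spec {A : Set M} (h : IsAltOmegaCopy A) :
    ∃ (e : ℕ → M) (ε : Bool), Spec e ε ∧ A = Set.range e := by
  have mem : ∀ n : ℕ, ((n : ℤ)) ∈ {z : ℤ | 0 ≤ z} := fun n => Int.natCast_nonneg n
  rcases h with hf | hf
  · obtain ⟨f⟩ := hf
    refine ⟨fun n => (f ⟨(n : ℤ), mem n⟩ : M), false, ?_, ?_⟩
    · intro i j
      rw [show (fun n : ℕ => ((f ⟨(n : ℤ), mem n⟩ : A) : M)) i ≤ _ ↔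
          f ⟨(i : ℤ), mem i⟩ ≤ f ⟨(j : ℤ), mem j⟩ from Subtype.coe_le_coe,
        f.le_iff_le]
      exact altsub_le_iff
    · ext x
      constructor
      · intro hx
        set y := f.symm ⟨x, hx⟩ with hy
        refine ⟨y.val.toNat, ?_⟩
        have hv : ((y.val.toNat : ℕ) : ℤ) = y.val := Int.toNat_of_nonneg y.mem
        have h2 : (⟨((y.val.toNat : ℕ) : ℤ), mem _⟩ : AltOmega) = y := AltSub.ext' hv
        show ((f ⟨((y.val.toNat : ℕ) : ℤ), mem _⟩ : A) : M) = x
        rw [h2, hy, f.apply_symm_apply]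
      · rintro ⟨n, rfl⟩
        exact (f ⟨(n : ℤ), mem n⟩).2
  · obtain ⟨f⟩ := hf
    refine ⟨fun n => (f (OrderDual.toDual ⟨(n : ℤ), mem n⟩) : M), true, ?_, ?_⟩
    · intro i j
      rw [show (fun n : ℕ => ((f (OrderDual.toDual ⟨(n : ℤ), mem n⟩) : A) : M)) i ≤ _ ↔
          f (OrderDual.toDual ⟨(i : ℤ), mem i⟩) ≤ f (OrderDual.toDual ⟨(j : ℤ), mem j⟩) from
            Subtype.coe_le_coe,
        f.le_iff_le, OrderDual.toDual_le_toDual]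
      exact altsub_le_iff
    · ext x
      constructor
      · intro hx
        set y := OrderDual.ofDual (f.symm ⟨x, hx⟩) with hy
        refine ⟨y.val.toNat, ?_⟩
        have hv : ((y.val.toNat : ℕ) : ℤ) = y.val := Int.toNat_of_nonneg y.mem
        have h2 : (⟨((y.val.toNat : ℕ) : ℤ), mem _⟩ : AltOmega) = y := AltSub.ext' hv
        show ((f (OrderDual.toDual ⟨((y.val.toNat : ℕ) : ℤ), mem _⟩) : A) : M) = x
        rw [h2, hy]
        simp
      · rintro ⟨n, rfl⟩
        exact (f (OrderDual.toDual ⟨(n : ℤ), mem n⟩)).2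

lemma walk {e e' : ℕ → M} {ε ε'} (he : Spec e ε) (he' : Spec e' ε')
    (h : Set.range e' ⊆ Set.range e) : ∃ k : ℕ, ∀ i, e' i = e (k + i) := by
  have hch : ∀ n : ℕ, ∃ m, e m = e' n := fun n => h ⟨n, rfl⟩
  choose s hs using hch
  have sinj : Function.Injective s := fun a b hab => he'.inj (by rw [← hs, ← hs, hab])
  have step : ∀ n, s (n + 1) = s n + 1 ∨ s n = s (n + 1) + 1 := by
    intro n
    have hcomp : e (s n) ≤ e (s (n + 1)) ∨ e (s (n + 1)) ≤ e (s n) := by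
      rw [hs, hs]; exact he'.adj' n
    have hne : s n ≠ s (n + 1) := fun hh => by simpa using sinj hh
    rcases he.adj hcomp hne with h1 | h1
    · exact Or.inl (by omega)
    · exact Or.inr (by omega)
  have up : ∀ n, s (n + 1) = s n + 1 := by
    intro n
    by_contra hc
    have hdn : s n = s (n + 1) + 1 := (step n).resolve_left hc
    have dec : ∀ t, s (n + t) = s (n + t + 1) + 1 ∧ s (n + t) + t = s n := by
      intro t
      induction t with
      | zero => exact ⟨by simpa using hdn, by simp⟩
      | succ t ih =>
        have c1 : n + (t + 1) = n + t + 1 := by omega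
        rw [c1]
        rcases step (n + t + 1) with h1 | h1
        · exfalso
          have h2 : s (n + t + 1 + 1) = s (n + t) := by omega
          have := sinj h2
          omega
        · exact ⟨h1, by omega⟩
    have := (dec (s n + 1)).2
    omega
  have lin : ∀ i, s i = s 0 + i := by
    intro i
    induction i with
    | zero => rfl
    | succ i ih => rw [up i, ih]; omega
  exact ⟨s 0, fun i => by rw [← hs i, lin i]⟩

lemma no_ascent (hAlt : ¬EmbedsIn AltZ M) (F : ℕ → Set M)
    (hcopy : ∀ n, IsAltOmegaCopy (F n)) (hss : ∀ n, F n ⊂ F (n + 1)) : False := by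
  choose e ε he hrange using fun n => copy_spec (hcopy n)
  have hsub : ∀ n, Set.range (e n) ⊆ Set.range (e (n + 1)) := by
    intro n; rw [← hrange, ← hrange]; exact (hss n).1
  choose k hk using fun n => walk (he (n + 1)) (he n) (hsub n)
  have hk1 : ∀ n, 1 ≤ k n := by
    intro n
    by_contra hc
    have h0 : k n = 0 := by omega
    refine (hss n).2 ?_
    rw [hrange, hrange]
    rintro x ⟨i, rfl⟩
    exact ⟨i, by rw [hk n i, h0, Nat.zero_add]⟩
  obtain ⟨K, hK0, hKs⟩ : ∃ K : ℕ → ℕ, K 0 = 0 ∧ ∀ n, K (n + 1) = K n + k n :=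
    ⟨fun n => Nat.rec 0 (fun m km => km + k m) n, rfl, fun n => rfl⟩
  have hKmono : ∀ {n m : ℕ}, n ≤ m → K n ≤ K m := by
    intro n m h
    induction m, h using Nat.le_induction with
    | base => exact le_rfl
    | succ m hm ih => rw [hKs]; omega
  have hKge : ∀ n, n ≤ K n := by
    intro n
    induction n with
    | zero => exact Nat.zero_le _
    | succ n ih => have := hk1 n; rw [hKs]; omega
  have estep : ∀ n m, n ≤ m → ∀ z : ℤ, 0 ≤ z + (K n : ℤ) →
      e n ((z + (K n : ℤ)).toNat) = e m ((z + (K m : ℤ)).toNat) := by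
    intro n m h
    induction m, h using Nat.le_induction with
    | base => intro z hz; rfl
    | succ m hm ih =>
      intro z hz
      rw [ih z hz, hk m ((z + (K m : ℤ)).toNat)]
      congr 1
      have h1 : K n ≤ K m := hKmono hm
      have h2 : K (m + 1) = K m + k m := hKs m
      omega
  let g : ℤ → M := fun z => e z.natAbs ((z + (K z.natAbs : ℤ)).toNat)
  have hKz : ∀ (n : ℕ) (z : ℤ), z.natAbs ≤ n → 0 ≤ z + (K n : ℤ) := by
    intro n z h
    have := hKge n
    omega
  have gdef : ∀ (n : ℕ) (z : ℤ), 0 ≤ z + (K n : ℤ) →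
      g z = e n ((z + (K n : ℤ)).toNat) := by
    intro n z hz
    rcases le_total n z.natAbs with h | h
    · exact (estep n z.natAbs h z hz).symm
    · exact estep z.natAbs n h z (hKz z.natAbs z le_rfl)
  have hmain : ∀ (n : ℕ) (i j : ℤ), 0 ≤ i + (K n : ℤ) → 0 ≤ j + (K n : ℤ) →
      (g i ≤ g j ↔ zaltB (ε n) (i + (K n : ℤ)) (j + (K n : ℤ))) := by
    intro n i j hi hj
    rw [gdef n i hi, gdef n j hj, he n]
    rw [Int.toNat_of_nonneg hi, Int.toNat_of_nonneg hj]
  have huni : ∀ i j : ℤ, g i ≤ g j ↔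
      ((g 1 ≤ g 0 ∧ zalt i j) ∨ (¬ g 1 ≤ g 0 ∧ zalt j i)) := by
    intro i j
    set n := i.natAbs + j.natAbs with hn
    have hi : 0 ≤ i + (K n : ℤ) := hKz n i (by omega)
    have hj : 0 ≤ j + (K n : ℤ) := hKz n j (by omega)
    have h1 := hmain n i j hi hj
    have h2 := hmain n 1 0 (by have := hKge n; omega) (by have := hKge n; omega)
    rw [h1, h2]
    have hm := Nat.mod_two_eq_zero_or_one (K n)
    cases hε : ε n <;> simp only [zaltB] <;> simp only [zalt_iff] <;> omega
  apply hAlt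
  by_cases hP : g 1 ≤ g 0
  · refine ⟨OrderEmbedding.ofMapLEIff (fun a : AltZ => g a.val) ?_⟩
    intro a b
    rw [huni a.val b.val, altsub_le_iff]
    simp [hP]
  · refine ⟨OrderEmbedding.ofMapLEIff (fun a : AltZ => g (1 - a.val)) ?_⟩
    intro a b
    rw [huni (1 - a.val) (1 - b.val), altsub_le_iff]
    simp only [hP, false_and, not_false_iff, true_and, false_or]
    rw [zalt_iff, zalt_iff]
    omega

theorem stmt14' {M : Type*} [PartialOrder M]
    (hAlt : ¬EmbedsIn AltZ M) :
    ∀ A : Set M, IsAltOmegaCopy A →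
      ∃ B : Set M, IsAltOmegaCopy B ∧ A ⊆ B ∧
        ∀ C : Set M, IsAltOmegaCopy C → B ⊆ C → B = C := by
  intro A hA
  have hch : ∀ c ⊆ {B : Set M | IsAltOmegaCopy B ∧ A ⊆ B},
      IsChain (· ⊆ ·) c → c.Nonempty →
      ∃ ub ∈ {B : Set M | IsAltOmegaCopy B ∧ A ⊆ B}, ∀ s ∈ c, s ⊆ ub := by
    intro c hcS hchain hcne
    obtain ⟨B₀, hB₀⟩ := hcne
    by_cases hmax : ∃ B ∈ c, ∀ B' ∈ c, B' ⊆ B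
    · obtain ⟨B, hB, hub⟩ := hmax
      exact ⟨B, hcS hB, hub⟩
    · exfalso
      push_neg at hmax
      have hstep : ∀ B : Set M, B ∈ c → ∃ B', B' ∈ c ∧ B ⊂ B' := by
        intro B hB
        obtain ⟨B', hB', hnsub⟩ := hmax B hB
        have hne : B ≠ B' := by
          rintro rfl
          exact hnsub subset_rfl
        rcases hchain hB hB' hne with h | h
        · exact ⟨B', hB', ssubset_of_subset_not_subset h hnsub⟩
        · exact absurd h hnsub
      let step : {B : Set M // B ∈ c} → {B : Set M // B ∈ c} :=
        fun p => ⟨(hstep p.1 p.2).choose, (hstep p.1 p.2).choose_spec.1⟩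
      let Fc : ℕ → {B : Set M // B ∈ c} := fun n => step^[n] ⟨B₀, hB₀⟩
      have hFs : ∀ n, Fc (n + 1) = step (Fc n) :=
        fun n => Function.iterate_succ_apply' step n _
      refine no_ascent hAlt (fun n => (Fc n).1) (fun n => (hcS (Fc n).2).1) ?_
      intro n
      show (Fc n).1 ⊂ (Fc (n + 1)).1
      rw [hFs n]
      exact (hstep (Fc n).1 (Fc n).2).choose_spec.2
  obtain ⟨B, hABsub, hBmax⟩ :=
    zorn_subset_nonempty {B : Set M | IsAltOmegaCopy B ∧ A ⊆ B} hch A ⟨hA, subset_rfl⟩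
  refine ⟨B, hBmax.1.1, hBmax.1.2, ?_⟩
  intro C hC hBC
  exact subset_antisymm hBC (hBmax.2 ⟨hC, hBmax.1.2.trans hBC⟩ hBC)

end Stmt14Aux

/-- in a CFPO into which `Alt` does not embed, every copy of
`Alt_ω` or `Alt_ω*` is contained in a maximal such copy. -/
theorem stmt14 {M : Type*} [PartialOrder M] (hM : IsCFPO M)
    (hAlt : ¬EmbedsIn AltZ M) :
    ∀ A : Set M, IsAltOmegaCopy A →
      ∃ B : Set M, IsAltOmegaCopy B ∧ A ⊆ B ∧
        ∀ C : Set M, IsAltOmegaCopy C → B ⊆ C → B = C :=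
  Stmt14Aux.stmt14' hAlt
end

section
/- For every tree T, the group of order-automorphisms of T is not isomorphic, as an abstract group, to the group of order-automorphisms of Alt. -/
open Set FirstOrder

universe u v

namespace S16

/-! ### Basic facts about elements of `orderAutGroup` -/

variable {M : Type*} [PartialOrder M]

lemma oag_le (g : ↥(orderAutGroup M)) {z w : M} : g.val z ≤ g.val w ↔ z ≤ w := g.2.1 z w

lemma oag_mem (f : Equiv.Perm M) (h : ∀ s t : M, f s ≤ f t ↔ s ≤ t) : f ∈ orderAutGroup M :=
  ⟨h, fun _ => rfl⟩

lemma oag_mul_apply (g h : ↥(orderAutGroup M)) (z : M) :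
    (g * h).val z = g.val (h.val z) := rfl

lemma oag_one_apply (z : M) : (1 : ↥(orderAutGroup M)).val z = z := rfl

lemma oag_inv_apply_apply (g : ↥(orderAutGroup M)) (z : M) :
    (g⁻¹).val (g.val z) = z := Equiv.symm_apply_apply _ z

lemma oag_apply_inv_apply (g : ↥(orderAutGroup M)) (z : M) :
    g.val ((g⁻¹).val z) = z := Equiv.apply_symm_apply _ z

lemma oag_ext {g h : ↥(orderAutGroup M)} (H : ∀ z, g.val z = h.val z) : g = h :=
  Subtype.ext (Equiv.ext H)

lemma oag_eq_iff {g h : ↥(orderAutGroup M)} : g = h ↔ ∀ z, g.val z = h.val z :=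
  ⟨fun e z => by rw [e], oag_ext⟩

lemma oag_inj (g : ↥(orderAutGroup M)) {z w : M} (h : g.val z = g.val w) : z = w :=
  g.val.injective h

/-! ### `AltZ` -/

abbrev mkZ (n : ℤ) : AltZ := ⟨n, Set.mem_univ n⟩

lemma AltZ.ext' {x y : AltZ} (h : x.val = y.val) : x = y := by
  cases x; cases y; simpa using h

lemma mkZ_val (x : AltZ) : mkZ x.val = x := AltZ.ext' rfl

lemma le_defZ (s t : AltZ) :
    s ≤ t ↔ (s.val = t.val ∨ (Even t.val ∧ (s.val = t.val - 1 ∨ s.val = t.val + 1))) :=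
  Iff.rfl

/-- reflection about even `c` -/
def reflP (c : ℤ) : Equiv.Perm AltZ where
  toFun z := mkZ (c - z.val)
  invFun z := mkZ (c - z.val)
  left_inv z := by apply AltZ.ext'; simp
  right_inv z := by apply AltZ.ext'; simp

lemma mkZ_val' (n : ℤ) : (mkZ n).val = n := rfl

lemma reflP_mem (c : ℤ) (hc : Even c) : reflP c ∈ orderAutGroup AltZ := by
  apply oag_mem
  intro s t
  show mkZ (c - s.val) ≤ mkZ (c - t.val) ↔ s ≤ t
  rw [le_defZ, le_defZ]
  simp only [mkZ_val']
  obtain ⟨e, he⟩ := hc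
  constructor
  · rintro (h | ⟨⟨r, hr⟩, h2⟩)
    · left; omega
    · exact Or.inr ⟨⟨e - r, by omega⟩, by omega⟩
  · rintro (h | ⟨⟨r, hr⟩, h2⟩)
    · left; omega
    · exact Or.inr ⟨⟨e - r, by omega⟩, by omega⟩

def AA : ↥(orderAutGroup AltZ) := ⟨reflP 0, reflP_mem 0 ⟨0, rfl⟩⟩

def BB : ↥(orderAutGroup AltZ) := ⟨reflP 2, reflP_mem 2 ⟨1, rfl⟩⟩

lemma AA_apply (z : AltZ) : AA.val z = mkZ (0 - z.val) := rfl
lemma BB_apply (z : AltZ) : BB.val z = mkZ (2 - z.val) := rfl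

lemma AA_mul_AA : AA * AA = 1 := by
  apply oag_ext; intro z; apply AltZ.ext'
  show (0 : ℤ) - (0 - z.val) = z.val
  omega

lemma BB_mul_BB : BB * BB = 1 := by
  apply oag_ext; intro z; apply AltZ.ext'
  show (2 : ℤ) - (2 - z.val) = z.val
  omega

lemma AA_ne_one : AA ≠ 1 := by
  intro h
  have := congrArg (fun g : ↥(orderAutGroup AltZ) => (g.val (mkZ 1)).val) h
  simp only [AA_apply] at this
  norm_num at this

lemma AB_apply (z : AltZ) : (AA * BB).val z = mkZ (z.val - 2) := by
  apply AltZ.ext'; show (0 : ℤ) - (2 - z.val) = z.val - 2; omega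

lemma ABpow_apply (k : ℤ) : ∀ z : AltZ, ((AA * BB) ^ k).val z = mkZ (z.val - 2 * k) := by
  induction k using Int.induction_on with
  | zero => intro z; simp [mkZ_val]
  | succ i ih =>
      intro z
      have h1 : (AA * BB) ^ ((i : ℤ) + 1) = (AA * BB) ^ (i : ℤ) * (AA * BB) := zpow_add_one _ _
      rw [h1, oag_mul_apply, AB_apply, ih]
      apply AltZ.ext'
      simp only [mkZ_val']
      ring
  | pred i ih =>
      intro z
      have h2 : ((-i : ℤ) - 1 + 1) = -(i : ℤ) := by ring
      have h1 : (AA * BB) ^ ((-i : ℤ) - 1) * (AA * BB) = (AA * BB) ^ (-(i : ℤ)) := by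
        rw [← zpow_add_one, h2]
      have hy : (AA * BB).val (mkZ (z.val + 2)) = z := by
        rw [AB_apply]
        apply AltZ.ext'
        simp only [mkZ_val']
        omega
      have h3 := ih (mkZ (z.val + 2))
      rw [← h1, oag_mul_apply, hy] at h3
      rw [h3]
      apply AltZ.ext'
      simp only [mkZ_val']
      ring

lemma ABpow_ne_one {k : ℤ} (hk : k ≠ 0) : (AA * BB) ^ k ≠ 1 := by
  intro h
  have := congrArg (fun g : ↥(orderAutGroup AltZ) => (g.val (mkZ 0)).val) h
  simp only [ABpow_apply, mkZ_val', oag_one_apply] at this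
  omega

/-- Every automorphism of `AltZ` is affine: `p ↦ u + d p` with `u` even, `d = ±1`. -/
lemma classify (g : ↥(orderAutGroup AltZ)) :
    ∃ u d : ℤ, Even u ∧ (d = 1 ∨ d = -1) ∧ ∀ p : ℤ, (g.val (mkZ p)).val = u + d * p := by
  -- general parity lemma
  have heven : ∀ (h : ↥(orderAutGroup AltZ)) (p : ℤ), Even p → Even ((h.val (mkZ p)).val) := by
    intro h p hp
    have hle : mkZ (p - 1) ≤ mkZ p := Or.inr ⟨hp, Or.inl rfl⟩
    have := (h.2.1 (mkZ (p - 1)) (mkZ p)).mpr hle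
    rcases this with h1 | ⟨h2, _⟩
    · exfalso
      have : mkZ (p - 1) = mkZ p := h.val.injective (AltZ.ext' h1)
      have := congrArg (fun w : AltZ => w.val) this
      simp only [mkZ_val'] at this
      omega
    · exact h2
  set f : ℤ → ℤ := fun p => (g.val (mkZ p)).val with hf
  have hinj : Function.Injective f := by
    intro p q h
    have : mkZ p = mkZ q := g.val.injective (AltZ.ext' h)
    have := congrArg (fun w : AltZ => w.val) this
    simpa only [mkZ_val'] using this
  have hOA : ∀ p q : ℤ, (mkZ (f p) ≤ mkZ (f q)) ↔ (mkZ p ≤ mkZ q) := by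
    intro p q
    have e1 : mkZ (f p) = g.val (mkZ p) := AltZ.ext' rfl
    have e2 : mkZ (f q) = g.val (mkZ q) := AltZ.ext' rfl
    rw [e1, e2]
    exact g.2.1 _ _
  have hadj : ∀ p : ℤ, f (p + 1) = f p + 1 ∨ f (p + 1) = f p - 1 := by
    intro p
    rcases Int.even_or_odd p with hp | hp
    · -- p even, p+1 is odd and below p
      have hle : mkZ (p + 1) ≤ mkZ p := Or.inr ⟨hp, Or.inr rfl⟩
      have := (hOA (p + 1) p).mpr hle
      rcases this with h1 | ⟨_, h2⟩
      · exfalso; have := hinj h1; omega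
      · simp only [mkZ_val'] at h2; omega
    · -- p odd, p ≤ p+1
      have hpe : Even (p + 1) := by rcases hp with ⟨r, hr⟩; exact ⟨r + 1, by omega⟩
      have hle : mkZ p ≤ mkZ (p + 1) := Or.inr ⟨hpe, Or.inl (by simp)⟩
      have := (hOA p (p + 1)).mpr hle
      rcases this with h1 | ⟨_, h2⟩
      · exfalso; have := hinj h1; omega
      · simp only [mkZ_val'] at h2; omega
  have hconsec : ∀ p : ℤ, f (p + 2) - f (p + 1) = f (p + 1) - f p := by
    intro p
    have h1 := hadj p
    have h2 := hadj (p + 1)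
    have h3 : f (p + 2) ≠ f p := by
      intro h; have := hinj h; omega
    have e : p + 1 + 1 = p + 2 := by ring
    rw [e] at h2
    omega
  set d : ℤ := f 1 - f 0 with hd
  have hdiff : ∀ p : ℤ, f (p + 1) - f p = d := by
    intro p
    induction p using Int.induction_on with
    | zero => show f (0 + 1) - f 0 = f 1 - f 0; norm_num
    | succ i ih =>
        have h := hconsec i
        have e : (i : ℤ) + 1 + 1 = i + 2 := by ring
        rw [e]
        omega
    | pred i ih =>
        have h := hconsec (-(i : ℤ) - 1)
        have e1 : -(i : ℤ) - 1 + 1 = -(i : ℤ) := by ring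
        have e2 : -(i : ℤ) - 1 + 2 = -(i : ℤ) + 1 := by ring
        rw [e1, e2] at h
        rw [e1]
        omega
  have hform : ∀ p : ℤ, f p = f 0 + d * p := by
    intro p
    induction p using Int.induction_on with
    | zero => simp
    | succ i ih => linear_combination ih + hdiff i
    | pred i ih =>
        have h := hdiff (-(i : ℤ) - 1)
        have e1 : -(i : ℤ) - 1 + 1 = -(i : ℤ) := by ring
        rw [e1] at h
        linear_combination ih - h
  refine ⟨f 0, d, heven g 0 ⟨0, rfl⟩, ?_, hform⟩
  have h := hadj 0
  norm_num at h
  omega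

lemma comm_reflP {c : ℤ} (hc : Even c) (R : ↥(orderAutGroup AltZ))
    (hR : ∀ z : AltZ, R.val z = mkZ (c - z.val))
    (g : ↥(orderAutGroup AltZ)) (hcomm : g * R = R * g) : g = 1 ∨ g = R := by
  obtain ⟨u, d, hu, hd, hform⟩ := classify g
  have key : ∀ p : ℤ, u + d * (c - p) = c - (u + d * p) := by
    intro p
    have := congrArg (fun h : ↥(orderAutGroup AltZ) => (h.val (mkZ p)).val) hcomm
    simp only [oag_mul_apply, hR, mkZ_val'] at this
    have e1 : (g.val (mkZ (c - p))).val = u + d * (c - p) := hform _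
    have e2 : (g.val (mkZ p)).val = u + d * p := hform _
    rw [e1] at this
    rw [e2] at this
    exact this
  rcases hd with hd1 | hd1
  · left
    have h0 := key 0
    apply oag_ext
    intro z
    apply AltZ.ext'
    have := hform z.val
    rw [hd1] at this h0
    have hz : g.val z = g.val (mkZ z.val) := by rw [mkZ_val]
    rw [hz, this, oag_one_apply]
    omega
  · right
    have h0 := key 0
    apply oag_ext
    intro z
    apply AltZ.ext'
    have := hform z.val
    rw [hd1] at this h0
    have hz : g.val z = g.val (mkZ z.val) := by rw [mkZ_val]
    rw [hz, this, hR]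
    simp only [mkZ_val']
    omega

lemma comm_AA (g : ↥(orderAutGroup AltZ)) (hcomm : g * AA = AA * g) : g = 1 ∨ g = AA :=
  comm_reflP ⟨0, rfl⟩ AA (fun _ => rfl) g hcomm

lemma comm_BB (g : ↥(orderAutGroup AltZ)) (hcomm : g * BB = BB * g) : g = 1 ∨ g = BB :=
  comm_reflP ⟨1, rfl⟩ BB (fun _ => rfl) g hcomm

lemma comm_ABpow {k : ℤ} (hk : k ≠ 0) (g : ↥(orderAutGroup AltZ))
    (hcomm : g * (AA * BB) ^ k = (AA * BB) ^ k * g) : ∃ j : ℤ, g = (AA * BB) ^ j := by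
  obtain ⟨u, d, hu, hd, hform⟩ := classify g
  have key : ∀ p : ℤ, u + d * (p - 2 * k) = (u + d * p) - 2 * k := by
    intro p
    have := congrArg (fun h : ↥(orderAutGroup AltZ) => (h.val (mkZ p)).val) hcomm
    simp only [oag_mul_apply, ABpow_apply, mkZ_val'] at this
    have e1 : (g.val (mkZ (p - 2 * k))).val = u + d * (p - 2 * k) := hform _
    have e2 : (g.val (mkZ p)).val = u + d * p := hform _
    rw [e1] at this
    rw [e2] at this
    exact this
  have hd1 : d = 1 := by
    rcases hd with h | h
    · exact h
    · exfalso; have := key 0; rw [h] at this; omega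
  obtain ⟨w, hw⟩ := hu
  refine ⟨-w, ?_⟩
  apply oag_ext
  intro z
  apply AltZ.ext'
  rw [ABpow_apply]
  have hz : g.val z = g.val (mkZ z.val) := by rw [mkZ_val]
  rw [hz]
  have := hform z.val
  rw [hd1] at this
  rw [this]
  simp only [mkZ_val']
  omega

/-! ### Tree-side machinery -/

section Tree

variable {T : Type*} [PartialOrder T]

def IsTree' (T : Type*) [PartialOrder T] : Prop :=
  (∀ s t : T, ∃ w, w ≤ s ∧ w ≤ t) ∧
    ∀ t a b : T, a ≤ t → b ≤ t → a ≤ b ∨ b ≤ a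

lemma oag_fix_zpow (g : ↥(orderAutGroup T)) {z : T} (h : g.val z = z) :
    ∀ k : ℤ, (g ^ k).val z = z := by
  have hnat : ∀ n : ℕ, (g ^ n).val z = z := by
    intro n
    induction n with
    | zero => simp [oag_one_apply]
    | succ n ih =>
        rw [pow_succ, oag_mul_apply, h, ih]
  intro k
  rcases k with n | n
  · rw [Int.ofNat_eq_coe, zpow_natCast]; exact hnat n
  · rw [zpow_negSucc]
    have := hnat (n + 1)
    calc ((g ^ (n + 1))⁻¹).val z = ((g ^ (n + 1))⁻¹).val ((g ^ (n + 1)).val z) := by rw [this]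
      _ = z := oag_inv_apply_apply _ _

lemma oag_ne_one_iff (g : ↥(orderAutGroup T)) : g ≠ 1 ↔ ∃ z, g.val z ≠ z := by
  constructor
  · intro h
    by_contra hc
    push_neg at hc
    exact h (oag_ext fun z => (hc z).trans (oag_one_apply z).symm)
  · rintro ⟨z, hz⟩ h
    rw [h] at hz
    exact hz (oag_one_apply z)

lemma oag_moved_apply (g : ↥(orderAutGroup T)) {z : T} (h : g.val z ≠ z) :
    g.val (g.val z) ≠ g.val z := fun hc => h (oag_inj g hc)

lemma commute_of_disjoint (g h : ↥(orderAutGroup T))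
    (hd : ∀ z, g.val z ≠ z → h.val z = z) : g * h = h * g := by
  apply oag_ext
  intro z
  rw [oag_mul_apply, oag_mul_apply]
  by_cases hg : g.val z = z
  · by_cases hh : h.val z = z
    · simp [hg, hh]
    · have h2 : g.val (h.val z) = h.val z := by
        by_contra hc
        exact oag_moved_apply h hh (hd _ hc)
      rw [h2, hg]
  · have h1 : h.val z = z := hd z hg
    have h2 : h.val (g.val z) = g.val z := hd _ (oag_moved_apply g hg)
    rw [h1, h2]

/-- upward closed, and every point below the set but not in it is below all of it -/
def GoodSet (C : Set T) : Prop :=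
  (∀ ⦃z z'⦄, z ∈ C → z ≤ z' → z' ∈ C) ∧
  (∀ ⦃z z' w⦄, z ∈ C → z' ≤ z → z' ∉ C → w ∈ C → z' ≤ w)

open Classical in
noncomputable def resfun (g : ↥(orderAutGroup T)) (C : Set T) : T → T :=
  fun z => if z ∈ C then g.val z else z

lemma resfun_mono (g : ↥(orderAutGroup T)) {C : Set T} (hC : GoodSet C)
    (hinv : ∀ z, z ∈ C ↔ g.val z ∈ C) {z z' : T} (h : z ≤ z') :
    resfun g C z ≤ resfun g C z' := by
  classical
  unfold resfun
  by_cases hz : z ∈ C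
  · have hz' : z' ∈ C := hC.1 hz h
    rw [if_pos hz, if_pos hz']
    exact (oag_le g).mpr h
  · by_cases hz' : z' ∈ C
    · rw [if_neg hz, if_pos hz']
      exact hC.2 hz' h hz ((hinv z').mp hz')
    · rw [if_neg hz, if_neg hz']
      exact h

lemma hinv_inv (g : ↥(orderAutGroup T)) {C : Set T}
    (hinv : ∀ z, z ∈ C ↔ g.val z ∈ C) : ∀ z, z ∈ C ↔ (g⁻¹).val z ∈ C := by
  intro z
  constructor
  · intro hz
    have := (hinv ((g⁻¹).val z))
    rw [oag_apply_inv_apply] at this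
    exact this.mpr hz
  · intro hz
    have := (hinv ((g⁻¹).val z)).mp hz
    rwa [oag_apply_inv_apply] at this

noncomputable def resG (g : ↥(orderAutGroup T)) (C : Set T) (hC : GoodSet C)
    (hinv : ∀ z, z ∈ C ↔ g.val z ∈ C) : ↥(orderAutGroup T) := by
  classical
  have hli : ∀ z, resfun g⁻¹ C (resfun g C z) = z := by
    intro z
    unfold resfun
    by_cases hz : z ∈ C
    · rw [if_pos hz, if_pos ((hinv z).mp hz)]
      exact oag_inv_apply_apply g z
    · rw [if_neg hz, if_neg hz]
  have hri : ∀ z, resfun g C (resfun g⁻¹ C z) = z := by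
    intro z
    unfold resfun
    by_cases hz : z ∈ C
    · rw [if_pos hz, if_pos ((hinv_inv g hinv z).mp hz)]
      exact oag_apply_inv_apply g z
    · rw [if_neg hz, if_neg hz]
  refine ⟨⟨resfun g C, resfun g⁻¹ C, hli, hri⟩, oag_mem _ ?_⟩
  intro s t
  show resfun g C s ≤ resfun g C t ↔ s ≤ t
  constructor
  · intro h
    have h2 := resfun_mono g⁻¹ hC (hinv_inv g hinv) h
    rwa [hli, hli] at h2
  · exact resfun_mono g hC hinv

lemma resG_apply (g : ↥(orderAutGroup T)) (C : Set T) (hC : GoodSet C)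
    (hinv : ∀ z, z ∈ C ↔ g.val z ∈ C) (z : T) :
    (resG g C hC hinv).val z = resfun g C z := rfl

open Classical in
lemma resG_apply_mem (g : ↥(orderAutGroup T)) (C : Set T) (hC : GoodSet C)
    (hinv : ∀ z, z ∈ C ↔ g.val z ∈ C) {z : T} (hz : z ∈ C) :
    (resG g C hC hinv).val z = g.val z := by
  rw [resG_apply]
  unfold resfun
  rw [if_pos hz]

open Classical in
lemma resG_apply_not_mem (g : ↥(orderAutGroup T)) (C : Set T) (hC : GoodSet C)
    (hinv : ∀ z, z ∈ C ↔ g.val z ∈ C) {z : T} (hz : z ∉ C) :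
    (resG g C hC hinv).val z = z := by
  rw [resG_apply]
  unfold resfun
  rw [if_neg hz]

lemma resG_comm (g : ↥(orderAutGroup T)) (C : Set T) (hC : GoodSet C)
    (hinv : ∀ z, z ∈ C ↔ g.val z ∈ C) :
    (resG g C hC hinv) * g = g * (resG g C hC hinv) := by
  apply oag_ext
  intro z
  rw [oag_mul_apply, oag_mul_apply]
  by_cases hz : z ∈ C
  · rw [resG_apply_mem g C hC hinv hz, resG_apply_mem g C hC hinv ((hinv z).mp hz)]
  · rw [resG_apply_not_mem g C hC hinv hz,
      resG_apply_not_mem g C hC hinv (fun hc => hz ((hinv z).mpr hc))]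

lemma inviff_zpow (g : ↥(orderAutGroup T)) {C : Set T} (h : ∀ z, z ∈ C ↔ g.val z ∈ C) :
    ∀ (k : ℤ) (z : T), z ∈ C ↔ (g ^ k).val z ∈ C := by
  have hnat : ∀ (g' : ↥(orderAutGroup T)), (∀ z, z ∈ C ↔ g'.val z ∈ C) →
      ∀ (n : ℕ) (z : T), z ∈ C ↔ (g' ^ n).val z ∈ C := by
    intro g' h' n
    induction n with
    | zero => intro z; rw [pow_zero]; rfl
    | succ n ih =>
        intro z
        rw [pow_succ, oag_mul_apply]
        exact (h' z).trans (ih (g'.val z))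
  intro k
  rcases k with n | n
  · intro z
    rw [Int.ofNat_eq_coe, zpow_natCast]
    exact hnat g h n z
  · intro z
    rw [zpow_negSucc]
    have h2 : ∀ z, z ∈ C ↔ ((g ^ (n + 1))⁻¹).val z ∈ C :=
      hinv_inv (g ^ (n + 1)) (hnat g h (n + 1))
    exact h2 z

lemma fix_of_lb (hT : IsTree' T) (a : ↥(orderAutGroup T)) (haa : a * a = 1)
    {w y : T} (h1 : w ≤ y) (h2 : w ≤ a.val y) : a.val w = w := by
  have haainv : ∀ z, a.val (a.val z) = z := by
    intro z
    have := congrArg (fun g : ↥(orderAutGroup T) => g.val z) haa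
    simpa [oag_mul_apply, oag_one_apply] using this
  have hw1 : a.val w ≤ a.val (a.val y) := (oag_le a).mpr h2
  rw [haainv] at hw1
  rcases hT.2 y w (a.val w) h1 hw1 with hc | hc
  · have : a.val w ≤ a.val (a.val w) := (oag_le a).mpr hc
    rw [haainv] at this
    exact le_antisymm this hc
  · have : a.val (a.val w) ≤ a.val w := (oag_le a).mpr hc
    rw [haainv] at this
    exact le_antisymm hc this

/-- split lemma for an element whose centralizer consists of the powers of `t`. -/
lemma split_t (t : ↥(orderAutGroup T))
    (hpow : ∀ k : ℤ, t ^ k = 1 → k = 0)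
    (hcent : ∀ g : ↥(orderAutGroup T), g * t = t * g → ∃ j : ℤ, g = t ^ j)
    {D : Set T} (hD : GoodSet D) (hinv : ∀ z, z ∈ D ↔ t.val z ∈ D)
    {z₀ : T} (hz₀ : z₀ ∈ D) (hz₀m : t.val z₀ ≠ z₀) :
    ∀ z, t.val z ≠ z → z ∈ D := by
  set v := resG t D hD hinv with hv
  obtain ⟨j, hj⟩ := hcent v (resG_comm t D hD hinv)
  have hj0 : j ≠ 0 := by
    intro h
    rw [h, zpow_zero] at hj
    have := congrArg (fun g : ↥(orderAutGroup T) => g.val z₀) hj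
    simp only [oag_one_apply] at this
    rw [hv] at this
    rw [resG_apply_mem t D hD hinv hz₀] at this
    exact hz₀m this
  have hsub : ∀ z, z ∉ D → (t ^ j).val z = z := by
    intro z hz
    rw [← hj, hv, resG_apply_not_mem t D hD hinv hz]
  have hagree : ∀ z, z ∈ D → (t ^ j).val z = t.val z := by
    intro z hz
    rw [← hj, hv, resG_apply_mem t D hD hinv hz]
  have hsub2 : ∀ z, z ∈ D → (t ^ (1 - j)).val z = z := by
    intro z hz
    have h1 : (1 : ℤ) - j = -j + 1 := by ring
    rw [h1, zpow_add, zpow_one, zpow_neg, oag_mul_apply]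
    have h2 : (t ^ j).val z = t.val z := hagree z hz
    calc ((t ^ j)⁻¹).val (t.val z) = ((t ^ j)⁻¹).val ((t ^ j).val z) := by rw [h2]
      _ = z := oag_inv_apply_apply _ _
  have hzero : t ^ (j * (1 - j)) = 1 := by
    apply oag_ext
    intro z
    rw [oag_one_apply]
    by_cases hz : z ∈ D
    · have h1 : j * (1 - j) = (1 - j) * j := by ring
      rw [h1, zpow_mul]
      exact oag_fix_zpow (t ^ (1 - j)) (hsub2 z hz) j
    · rw [zpow_mul]
      exact oag_fix_zpow (t ^ j) (hsub z hz) (1 - j)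
  have := hpow _ hzero
  have hj1 : j = 1 := by
    rcases mul_eq_zero.mp this with h | h
    · exact absurd h hj0
    · omega
  rw [hj1, zpow_one] at hj
  intro z hz
  by_contra hc
  rw [← hj, hv, resG_apply_not_mem t D hD hinv hc] at hz
  exact hz rfl

lemma split_a (a : ↥(orderAutGroup T))
    (hcent : ∀ g : ↥(orderAutGroup T), g * a = a * g → g = 1 ∨ g = a)
    {D : Set T} (hD : GoodSet D) (hinv : ∀ z, z ∈ D ↔ a.val z ∈ D) :
    (∀ z, z ∈ D → a.val z = z) ∨ (∀ z, z ∉ D → a.val z = z) := by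
  set v := resG a D hD hinv with hv
  rcases hcent v (resG_comm a D hD hinv) with h | h
  · left
    intro z hz
    have := congrArg (fun g : ↥(orderAutGroup T) => g.val z) h
    simp only [oag_one_apply] at this
    rw [hv, resG_apply_mem a D hD hinv hz] at this
    exact this
  · right
    intro z hz
    have := congrArg (fun g : ↥(orderAutGroup T) => g.val z) h
    rw [hv, resG_apply_not_mem a D hD hinv hz] at this
    exact this.symm

lemma oag_lt (g : ↥(orderAutGroup T)) {z w : T} : g.val z < g.val w ↔ z < w := by
  rw [lt_iff_le_not_ge, lt_iff_le_not_ge, oag_le, oag_le]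

/-! ### connectedness relation and classes -/

def Rel (C : Set T) (x y : T) : Prop := x ∈ C ∧ y ∈ C ∧ ∃ w ∈ C, w ≤ x ∧ w ≤ y

lemma Rel.symm {C : Set T} {x y : T} (h : Rel C x y) : Rel C y x :=
  ⟨h.2.1, h.1, let ⟨w, hw, h1, h2⟩ := h.2.2; ⟨w, hw, h2, h1⟩⟩

lemma Rel.trans (hT : IsTree' T) {C : Set T} {x y z : T}
    (h1 : Rel C x y) (h2 : Rel C y z) : Rel C x z := by
  obtain ⟨hx, hy, w, hw, hwx, hwy⟩ := h1
  obtain ⟨_, hz, w', hw', hwy', hwz⟩ := h2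
  rcases hT.2 y w w' hwy hwy' with hc | hc
  · exact ⟨hx, hz, w, hw, hwx, le_trans hc hwz⟩
  · exact ⟨hx, hz, w', hw', le_trans hc hwx, hwz⟩

lemma rel_refl {C : Set T} {x : T} (hx : x ∈ C) : Rel C x x := ⟨hx, hx, x, hx, le_rfl, le_rfl⟩

lemma rel_map (g : ↥(orderAutGroup T)) {C : Set T}
    (hinv : ∀ z, z ∈ C ↔ g.val z ∈ C) {x y : T} :
    Rel C x y ↔ Rel C (g.val x) (g.val y) := by
  constructor
  · rintro ⟨hx, hy, w, hw, h1, h2⟩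
    exact ⟨(hinv x).mp hx, (hinv y).mp hy, g.val w, (hinv w).mp hw,
      (oag_le g).mpr h1, (oag_le g).mpr h2⟩
  · rintro ⟨hx, hy, w, hw, h1, h2⟩
    refine ⟨(hinv x).mpr hx, (hinv y).mpr hy, (g⁻¹).val w, (hinv_inv g hinv w).mp hw, ?_, ?_⟩
    · have := (oag_le g⁻¹).mpr h1
      rwa [oag_inv_apply_apply] at this
    · have := (oag_le g⁻¹).mpr h2
      rwa [oag_inv_apply_apply] at this

lemma class_good (hT : IsTree' T) {C : Set T} (hC : GoodSet C) (x : T) :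
    GoodSet {z | Rel C x z} := by
  constructor
  · rintro z z' ⟨hx, hz, w, hw, h1, h2⟩ hle
    exact ⟨hx, hC.1 hz hle, w, hw, h1, le_trans h2 hle⟩
  · rintro z z' w hz hle hz' hw
    by_cases hz'C : z' ∈ C
    · exfalso
      apply hz'
      have hrel : Rel C z z' := ⟨hz.2.1, hz'C, z', hz'C, hle, le_rfl⟩
      exact Rel.trans hT hz hrel
    · exact hC.2 hz.2.1 hle hz'C hw.2.1

lemma cone_good (hT : IsTree' T) (q : T) : GoodSet {z | q < z} := by
  constructor
  · intro z z' hz hle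
    exact lt_of_lt_of_le hz hle
  · intro z z' w hz hle hz' hw
    rcases hT.2 z z' q hle (le_of_lt hz) with hc | hc
    · exact le_trans hc (le_of_lt hw)
    · have hq : q = z' := (lt_or_eq_of_le hc).resolve_left hz'
      rw [← hq]
      exact le_of_lt hw

/-! ### the main theorem -/

theorem main {T : Type*} [PartialOrder T] (hT : IsTree' T) :
    ¬Nonempty (↥(orderAutGroup T) ≃* ↥(orderAutGroup AltZ)) := by
  rintro ⟨Φ⟩
  classical
  set a : ↥(orderAutGroup T) := Φ.symm AA with ha
  set b : ↥(orderAutGroup T) := Φ.symm BB with hb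
  set t : ↥(orderAutGroup T) := a * b with ht
  have hΦa : Φ a = AA := Φ.apply_symm_apply AA
  have hΦb : Φ b = BB := Φ.apply_symm_apply BB
  have hΦt : Φ t = AA * BB := by rw [ht, map_mul, hΦa, hΦb]
  have haa : a * a = 1 := by
    apply Φ.injective
    rw [map_mul, hΦa, map_one, AA_mul_AA]
  have hbb : b * b = 1 := by
    apply Φ.injective
    rw [map_mul, hΦb, map_one, BB_mul_BB]
  have hane : a ≠ 1 := fun h => AA_ne_one (by rw [← hΦa, h, map_one])
  have hpow : ∀ k : ℤ, t ^ k = 1 → k = 0 := by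
    intro k hk
    by_contra h
    apply ABpow_ne_one h
    rw [← hΦt, ← map_zpow, hk, map_one]
  have hcenta : ∀ g, g * a = a * g → g = 1 ∨ g = a := by
    intro g hg
    have hcg : Φ g * AA = AA * Φ g := by rw [← hΦa, ← map_mul, ← map_mul, hg]
    rcases comm_AA _ hcg with h | h
    · exact Or.inl (Φ.injective (by rw [h, map_one]))
    · exact Or.inr (Φ.injective (by rw [h, hΦa]))
  have hcentb : ∀ g, g * b = b * g → g = 1 ∨ g = b := by
    intro g hg
    have hcg : Φ g * BB = BB * Φ g := by rw [← hΦb, ← map_mul, ← map_mul, hg]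
    rcases comm_BB _ hcg with h | h
    · exact Or.inl (Φ.injective (by rw [h, map_one]))
    · exact Or.inr (Φ.injective (by rw [h, hΦb]))
  have hcentt : ∀ k : ℤ, k ≠ 0 → ∀ g, g * t ^ k = t ^ k * g → ∃ j : ℤ, g = t ^ j := by
    intro k hk g hg
    have hcg : Φ g * (AA * BB) ^ k = (AA * BB) ^ k * Φ g := by
      rw [← hΦt, ← map_zpow, ← map_mul, ← map_mul, hg]
    obtain ⟨j, hj⟩ := comm_ABpow hk _ hcg
    exact ⟨j, Φ.injective (by rw [hj, map_zpow, hΦt])⟩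
  have hcentt1 : ∀ g, g * t = t * g → ∃ j : ℤ, g = t ^ j := by
    intro g hg
    refine hcentt 1 one_ne_zero g ?_
    rw [zpow_one]
    exact hg
  have hainv : a⁻¹ = a := inv_eq_of_mul_eq_one_right haa
  have hbinv : b⁻¹ = b := inv_eq_of_mul_eq_one_right hbb
  have hata : a * t * a = t⁻¹ := by
    rw [ht, mul_inv_rev, hainv, hbinv]
    calc a * (a * b) * a = (a * a) * (b * a) := by group
      _ = b * a := by rw [haa, one_mul]
  have hbtb : b * t * b = t⁻¹ := by
    rw [ht, mul_inv_rev, hainv, hbinv]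
    calc b * (a * b) * b = b * a * (b * b) := by group
      _ = b * a := by rw [hbb, mul_one]
  have hconj : ∀ k : ℤ, a * t ^ k * a = t ^ (-k) := by
    intro k
    have h1 := map_zpow (MulAut.conj a) t k
    rw [MulAut.conj_apply, MulAut.conj_apply, hainv, hata] at h1
    rw [h1, inv_zpow, ← zpow_neg]
  have haaP : ∀ z, a.val (a.val z) = z := by
    intro z
    have h1 := congrArg (fun g : ↥(orderAutGroup T) => g.val z) haa
    rw [oag_mul_apply, oag_one_apply] at h1
    exact h1
  have hbbP : ∀ z, b.val (b.val z) = z := by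
    intro z
    have h1 := congrArg (fun g : ↥(orderAutGroup T) => g.val z) hbb
    rw [oag_mul_apply, oag_one_apply] at h1
    exact h1
  have hconjP : ∀ (k : ℤ) z, a.val ((t ^ k).val z) = (t ^ (-k)).val (a.val z) := by
    intro k z
    have h1 : a * t ^ k = t ^ (-k) * a := by
      calc a * t ^ k = (a * t ^ k * a) * a := by
            rw [mul_assoc (a * t ^ k), haa, mul_one]
        _ = t ^ (-k) * a := by rw [hconj k]
    have h2 := congrArg (fun g : ↥(orderAutGroup T) => g.val z) h1
    rw [oag_mul_apply, oag_mul_apply] at h2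
    exact h2
  have hmovea : ∀ z, t.val z ≠ z → t.val (a.val z) ≠ a.val z := by
    intro z hz hc
    have h1 := congrArg (fun g : ↥(orderAutGroup T) => g.val z) hata
    rw [oag_mul_apply, oag_mul_apply, hc, haaP] at h1
    have h2 := congrArg t.val h1
    rw [oag_apply_inv_apply] at h2
    exact hz h2
  have hmoveb : ∀ z, t.val z ≠ z → t.val (b.val z) ≠ b.val z := by
    intro z hz hc
    have h1 := congrArg (fun g : ↥(orderAutGroup T) => g.val z) hbtb
    rw [oag_mul_apply, oag_mul_apply, hc, hbbP] at h1
    have h2 := congrArg t.val h1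
    rw [oag_apply_inv_apply] at h2
    exact hz h2
  have tk_comp : ∀ (p q : ℤ) (z : T), (t ^ p).val ((t ^ q).val z) = (t ^ (p + q)).val z := by
    intro p q z
    rw [zpow_add, oag_mul_apply]
  -- squared-t lemma used in several places
  have ht2 : t * t ≠ 1 := by
    intro h
    have : t ^ (2 : ℤ) = 1 := by
      rw [show (2 : ℤ) = 1 + 1 from rfl, zpow_add, zpow_one]
      exact h
    have := hpow 2 this
    omega
  -- Zorn: a minimal good invariant set containing both supports
  set S : Set (Set T) := {C | GoodSet C ∧ (∀ z, z ∈ C ↔ a.val z ∈ C) ∧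
    (∀ z, z ∈ C ↔ b.val z ∈ C) ∧ (∀ z, a.val z ≠ z → z ∈ C) ∧
    (∀ z, b.val z ≠ z → z ∈ C)} with hSdef
  have hSzorn : ∀ c ⊆ S, IsChain (· ⊆ ·) c → ∃ lb ∈ S, ∀ s ∈ c, lb ⊆ s := by
    intro c hc _
    rcases c.eq_empty_or_nonempty with hemp | ⟨C₁, hC₁⟩
    · refine ⟨Set.univ, ⟨⟨fun _ _ _ _ => trivial, fun z z' w _ _ hz' _ => absurd trivial hz'⟩,
        fun _ => by simp, fun _ => by simp, fun _ _ => trivial, fun _ _ => trivial⟩, ?_⟩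
      intro s hs
      rw [hemp] at hs
      exact absurd hs (Set.notMem_empty s)
    · refine ⟨⋂₀ c, ⟨⟨?_, ?_⟩, ?_, ?_, ?_, ?_⟩, fun s hs => Set.sInter_subset_of_mem hs⟩
      · intro z z' hz hle
        intro Ci hCi
        exact (hc hCi).1.1 (hz Ci hCi) hle
      · intro z z' w hz hle hz' hw
        rw [Set.mem_sInter] at hz'
        push_neg at hz'
        obtain ⟨C₀, hC₀c, hC₀⟩ := hz'
        exact (hc hC₀c).1.2 (hz C₀ hC₀c) hle hC₀ (hw C₀ hC₀c)
      · intro z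
        simp only [Set.mem_sInter]
        exact ⟨fun h Ci hCi => ((hc hCi).2.1 z).mp (h Ci hCi),
          fun h Ci hCi => ((hc hCi).2.1 z).mpr (h Ci hCi)⟩
      · intro z
        simp only [Set.mem_sInter]
        exact ⟨fun h Ci hCi => ((hc hCi).2.2.1 z).mp (h Ci hCi),
          fun h Ci hCi => ((hc hCi).2.2.1 z).mpr (h Ci hCi)⟩
      · intro z hz Ci hCi
        exact (hc hCi).2.2.2.1 z hz
      · intro z hz Ci hCi
        exact (hc hCi).2.2.2.2 z hz
  obtain ⟨C, hCS⟩ := zorn_superset S hSzorn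
  obtain ⟨hCg, hCa, hCb, hsa, hsb⟩ := hCS.1
  have hCt : ∀ z, z ∈ C ↔ t.val z ∈ C := by
    intro z
    have h1 : t.val z = a.val (b.val z) := by rw [ht, oag_mul_apply]
    rw [h1]
    exact (hCb z).trans (hCa (b.val z))
  have hCtk : ∀ (k : ℤ) (z : T), z ∈ C ↔ (t ^ k).val z ∈ C := inviff_zpow t hCt
  have hsuppt : ∀ z, t.val z ≠ z → z ∈ C := by
    intro z hz
    by_cases hb1 : b.val z = z
    · apply hsa
      intro ha1
      apply hz
      rw [ht, oag_mul_apply, hb1, ha1]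
    · exact hsb z hb1
  have htne : t ≠ 1 := by
    intro h
    have : t ^ (1 : ℤ) = 1 := by rw [zpow_one, h]
    have := hpow 1 this
    omega
  obtain ⟨x, hx⟩ := (oag_ne_one_iff t).mp htne
  have hxC : x ∈ C := hsuppt x hx
  -- the union of the classes of the orbit of x
  set U : Set T := {z | ∃ k : ℤ, Rel C ((t ^ k).val x) z} with hUdef
  have hUgood : GoodSet U := by
    constructor
    · rintro z z' ⟨k, hrel⟩ hle
      exact ⟨k, (class_good hT hCg ((t ^ k).val x)).1 hrel hle⟩
    · rintro z z' w ⟨k, hrel⟩ hle hz' ⟨k₂, hrel₂⟩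
      by_cases hz'C : z' ∈ C
      · exfalso
        exact hz' ⟨k, Rel.trans hT hrel ⟨hrel.2.1, hz'C, z', hz'C, hle, le_rfl⟩⟩
      · exact hCg.2 hrel.2.1 hle hz'C hrel₂.2.1
  have hUt : ∀ z, z ∈ U ↔ t.val z ∈ U := by
    intro z
    constructor
    · rintro ⟨k, hrel⟩
      refine ⟨k + 1, ?_⟩
      have h1 := (rel_map t hCt).mp hrel
      have e : t.val ((t ^ k).val x) = (t ^ (k + 1)).val x := by
        have h2 := tk_comp 1 k x
        rw [zpow_one] at h2
        rw [h2, show (1 : ℤ) + k = k + 1 from add_comm 1 k]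
      rwa [e] at h1
    · rintro ⟨k, hrel⟩
      refine ⟨k - 1, ?_⟩
      have h1 := (rel_map t⁻¹ (hinv_inv t hCt)).mp hrel
      rw [oag_inv_apply_apply] at h1
      have e : (t⁻¹).val ((t ^ k).val x) = (t ^ (k - 1)).val x := by
        have h2 := tk_comp (-1) k x
        rw [zpow_neg_one] at h2
        rw [h2, show (-1 : ℤ) + k = k - 1 by ring]
      rwa [e] at h1
  have hxU : x ∈ U := by
    refine ⟨0, ?_⟩
    have e : (t ^ (0 : ℤ)).val x = x := by rw [zpow_zero, oag_one_apply]
    rw [e]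
    exact rel_refl hxC
  have hsuppU : ∀ z, t.val z ≠ z → z ∈ U := split_t t hpow hcentt1 hUgood hUt hxU hx
  -- shifting relations
  have hrel_shift : ∀ (p : ℤ) {u v : T}, Rel C u v →
      Rel C ((t ^ p).val u) ((t ^ p).val v) := by
    intro p u v h
    exact (rel_map (t ^ p) (hCtk p)).mp h
  by_cases hfin : ∃ k : ℤ, k ≠ 0 ∧ Rel C x ((t ^ k).val x)
  · -- some positive period
    obtain ⟨k, hk0, hkrel⟩ := hfin
    have hposex : ∃ n : ℕ, 0 < n ∧ Rel C x ((t ^ (n : ℤ)).val x) := by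
      rcases lt_trichotomy k 0 with hneg | hzero | hposk
      · refine ⟨(-k).toNat, by omega, ?_⟩
        have h1 := hrel_shift (-k) hkrel
        have e1 : (t ^ (-k)).val ((t ^ k).val x) = x := by
          rw [tk_comp, show -k + k = 0 by ring, zpow_zero, oag_one_apply]
        rw [e1] at h1
        have e2 : ((((-k).toNat : ℕ)) : ℤ) = -k := Int.toNat_of_nonneg (by omega)
        rw [e2]
        exact h1.symm
      · exact absurd hzero hk0
      · refine ⟨k.toNat, by omega, ?_⟩
        have e2 : (((k.toNat : ℕ)) : ℤ) = k := Int.toNat_of_nonneg (by omega)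
        rw [e2]
        exact hkrel
    rcases Nat.lt_or_ge (Nat.find hposex) 2 with hm1 | hm2
    · -- m = 1 : Rel C x (t x)
      have hm1' : Nat.find hposex = 1 := by
        have := (Nat.find_spec hposex).1
        omega
      have hr1 : Rel C x (t.val x) := by
        have h := (Nat.find_spec hposex).2
        rw [hm1'] at h
        simpa [zpow_one] using h
      -- B := class of x; show everything supported there, get B = C, descend: contradiction
      set B : Set T := {z | Rel C x z} with hBdef
      have hBgood : GoodSet B := class_good hT hCg x
      have hrtinv : Rel C x ((t⁻¹).val x) := by
        have h1 := (rel_map t⁻¹ (hinv_inv t hCt)).mp hr1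
        rw [oag_inv_apply_apply] at h1
        exact h1.symm
      have hBt : ∀ z, z ∈ B ↔ t.val z ∈ B := by
        intro z
        constructor
        · intro hz
          exact Rel.trans hT hr1 ((rel_map t hCt).mp hz)
        · intro hz
          have h1 := (rel_map t⁻¹ (hinv_inv t hCt)).mp hz
          rw [oag_inv_apply_apply] at h1
          exact Rel.trans hT hrtinv h1
      have hxB : x ∈ B := rel_refl hxC
      have hsuppB : ∀ z, t.val z ≠ z → z ∈ B := split_t t hpow hcentt1 hBgood hBt hxB hx
      have haxB : Rel C x (a.val x) := hsuppB _ (hmovea x hx)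
      have hbxB : Rel C x (b.val x) := hsuppB _ (hmoveb x hx)
      have hBa : ∀ z, z ∈ B ↔ a.val z ∈ B := by
        intro z
        constructor
        · intro hz
          exact Rel.trans hT haxB ((rel_map a hCa).mp hz)
        · intro hz
          exact (rel_map a hCa).mpr (Rel.trans hT haxB.symm hz)
      have hBb : ∀ z, z ∈ B ↔ b.val z ∈ B := by
        intro z
        constructor
        · intro hz
          exact Rel.trans hT hbxB ((rel_map b hCb).mp hz)
        · intro hz
          exact (rel_map b hCb).mpr (Rel.trans hT hbxB.symm hz)
      have hxAB : ∀ (hA : ∀ z, z ∈ B → a.val z = z) (hB1 : ∀ z, z ∈ B → b.val z = z), False := by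
        intro hA hB1
        apply hx
        rw [ht, oag_mul_apply, hB1 x hxB, hA x hxB]
      have hba : b * a = t⁻¹ := by
        rw [ht, mul_inv_rev, hainv, hbinv]
      have hmixed : ∀ g₁ g₂ : ↥(orderAutGroup T), (g₁ * g₂ = t ∨ g₁ * g₂ = t⁻¹) →
          g₁ * g₁ = 1 → g₂ * g₂ = 1 →
          (∀ z, z ∈ B → g₁.val z = z) → (∀ z, z ∉ B → g₂.val z = z) → False := by
        intro g₁ g₂ hg12 h₁sq h₂sq hg₁ hg₂
        have hcd : g₂ * g₁ = g₁ * g₂ := by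
          apply commute_of_disjoint
          intro z hz
          by_cases hzB : z ∈ B
          · exact hg₁ z hzB
          · exact absurd (hg₂ z hzB) hz
        have hsq : (g₁ * g₂) * (g₁ * g₂) = 1 := by
          calc g₁ * g₂ * (g₁ * g₂) = g₁ * (g₂ * g₁) * g₂ := by group
            _ = g₁ * (g₁ * g₂) * g₂ := by rw [hcd]
            _ = (g₁ * g₁) * (g₂ * g₂) := by group
            _ = 1 := by rw [h₁sq, h₂sq, one_mul]
        apply ht2
        rcases hg12 with h | h
        · rwa [h] at hsq
        · rw [h] at hsq
          have := congrArg (fun g : ↥(orderAutGroup T) => g⁻¹) hsq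
          rwa [mul_inv_rev, inv_inv, inv_one] at this
      rcases split_a a hcenta hBgood hBa with haB | haB <;>
        rcases split_a b hcentb hBgood hBb with hbB | hbB
      · exact hxAB haB hbB
      · -- a trivial on B, b supported in B
        exact hmixed a b (Or.inl ht.symm) haa hbb haB hbB
      · -- b trivial on B, a supported in B
        exact hmixed b a (Or.inr hba) hbb haa hbB haB
      · -- both supported in B
        have hBS : B ∈ S := ⟨hBgood, hBa, hBb,
          fun z hz => by_contra fun hc => hz (haB z hc),
          fun z hz => by_contra fun hc => hz (hbB z hc)⟩
        have hBsubC : B ⊆ C := fun z hz => hz.2.1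
        have hBC : B = C := subset_antisymm hBsubC (hCS.2 hBS hBsubC)
        have hallrel : ∀ {z z' : T}, z ∈ C → z' ∈ C → Rel C z z' := by
          intro z z' hz hz'
          rw [← hBC] at hz hz'
          exact Rel.trans hT (Rel.symm hz) hz'
        obtain ⟨y, hy⟩ := (oag_ne_one_iff a).mp hane
        have hyC : y ∈ C := hsa y hy
        have hayC : a.val y ∈ C := hsa _ (oag_moved_apply a hy)
        obtain ⟨w, hwC, hwy, hway⟩ := (hallrel hyC hayC).2.2
        have haw : a.val w = w := fix_of_lb hT a haa hwy hway
        have hbwC : b.val w ∈ C := (hCb w).mp hwC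
        obtain ⟨q, hqC, hqw, hqbw⟩ := (hallrel hwC hbwC).2.2
        have hbq : b.val q = q := fix_of_lb hT b hbb hqw hqbw
        have haq : a.val q = q := fix_of_lb hT a haa hqw (by rw [haw]; exact hqw)
        set C' : Set T := {z | q < z} with hC'def
        have hC'good : GoodSet C' := cone_good hT q
        have hC'a : ∀ z, z ∈ C' ↔ a.val z ∈ C' := by
          intro z
          have h1 := oag_lt a (z := q) (w := z)
          rw [haq] at h1
          exact h1.symm
        have hC'b : ∀ z, z ∈ C' ↔ b.val z ∈ C' := by
          intro z
          have h1 := oag_lt b (z := q) (w := z)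
          rw [hbq] at h1
          exact h1.symm
        have hyC' : y ∈ C' := by
          refine lt_of_le_of_ne (le_trans hqw hwy) ?_
          intro e
          apply hy
          rw [← e, haq, e]
        rcases split_a a hcenta hC'good hC'a with haC' | haC'
        · exact hy (haC' y hyC')
        rcases split_a b hcentb hC'good hC'b with hbC' | hbC'
        · -- b trivial on C', a supported in C' : disjoint supports
          apply ht2
          have hcd : a * b = b * a := by
            apply commute_of_disjoint
            intro z hz
            by_cases hzC' : z ∈ C'
            · exact hbC' z hzC'
            · exact absurd (haC' z hzC') hz
          calc t * t = a * (b * a) * b := by rw [ht]; group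
            _ = a * (a * b) * b := by rw [hcd]
            _ = (a * a) * (b * b) := by group
            _ = 1 := by rw [haa, hbb, one_mul]
        · have hC'S : C' ∈ S := ⟨hC'good, hC'a, hC'b,
            fun z hz => by_contra fun hc => hz (haC' z hc),
            fun z hz => by_contra fun hc => hz (hbC' z hc)⟩
          have hC'sub : C' ⊆ C := fun z hz => hCg.1 hqC (le_of_lt hz)
          have : C ⊆ C' := hCS.2 hC'S hC'sub
          exact lt_irrefl q (this hqC)
    · -- m ≥ 2
      set m : ℤ := (Nat.find hposex : ℤ) with hmdef
      have hm0 : (0 : ℤ) < m := by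
        have := (Nat.find_spec hposex).1
        omega
      have hmne : m ≠ 0 := by omega
      have hmrel : Rel C x ((t ^ m).val x) := (Nat.find_spec hposex).2
      have htmne : t ^ m ≠ 1 := fun h => by have := hpow m h; omega
      obtain ⟨z₀, hz₀m⟩ := (oag_ne_one_iff (t ^ m)).mp htmne
      have hz₀U : z₀ ∈ U := by
        apply hsuppU
        intro hfix
        exact hz₀m (oag_fix_zpow t hfix m)
      obtain ⟨k₀, hk₀⟩ := hz₀U
      set D : Set T := {z | Rel C ((t ^ k₀).val x) z} with hDdef
      have hDgood : GoodSet D := class_good hT hCg _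
      have hshift : ∀ p : ℤ, Rel C ((t ^ p).val x) ((t ^ (p + m)).val x) := by
        intro p
        have h1 := hrel_shift p hmrel
        rwa [tk_comp] at h1
      have hDtm : ∀ z, z ∈ D ↔ (t ^ m).val z ∈ D := by
        intro z
        constructor
        · intro hz
          have h1 := hrel_shift m hz
          rw [tk_comp] at h1
          refine Rel.trans hT ?_ h1
          have h2 := hshift k₀
          rwa [show k₀ + m = m + k₀ from add_comm k₀ m] at h2
        · intro hz
          have h1 := hrel_shift (-m) hz
          rw [tk_comp, tk_comp, show -m + m = 0 by ring, zpow_zero] at h1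
          rw [show (1 : ↥(orderAutGroup T)).val z = z from rfl] at h1
          refine Rel.trans hT ?_ h1
          have h2 := hshift (-m + k₀)
          rw [show -m + k₀ + m = k₀ by ring] at h2
          exact h2.symm
      have hz₀D : z₀ ∈ D := hk₀
      set v := resG (t ^ m) D hDgood hDtm with hvdef
      obtain ⟨j, hj⟩ := hcentt m hmne v (resG_comm (t ^ m) D hDgood hDtm)
      have hj0 : j ≠ 0 := by
        intro h
        rw [h, zpow_zero] at hj
        have h1 := congrArg (fun g : ↥(orderAutGroup T) => g.val z₀) hj
        rw [hvdef, resG_apply_mem (t ^ m) D hDgood hDtm hz₀D, oag_one_apply] at h1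
        exact hz₀m h1
      have hsuppj : ∀ z, z ∉ D → (t ^ j).val z = z := by
        intro z hz
        rw [← hj, hvdef, resG_apply_not_mem (t ^ m) D hDgood hDtm hz]
      have htjz₀ : (t ^ j).val z₀ ≠ z₀ := by
        rw [← hj, hvdef, resG_apply_mem (t ^ m) D hDgood hDtm hz₀D]
        exact hz₀m
      have hmoved2 : (t ^ j).val (t.val z₀) ≠ t.val z₀ := by
        have e1 : (t ^ j).val (t.val z₀) = t.val ((t ^ j).val z₀) := by
          have e2 : t.val z₀ = (t ^ (1 : ℤ)).val z₀ := by rw [zpow_one]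
          rw [e2, tk_comp]
          have e3 : t.val ((t ^ j).val z₀) = (t ^ (1 + j)).val z₀ := by
            have e4 := tk_comp 1 j z₀
            rwa [zpow_one] at e4
          rw [e3, show j + 1 = 1 + j from add_comm j 1]
        rw [e1]
        intro hc
        exact htjz₀ (oag_inj t hc)
      have htz₀D : t.val z₀ ∈ D := by
        by_contra hc
        exact hmoved2 (hsuppj _ hc)
      have htz₀D' : Rel C ((t ^ (k₀ + 1)).val x) (t.val z₀) := by
        have h1 := (rel_map t hCt).mp hk₀
        have e : t.val ((t ^ k₀).val x) = (t ^ (k₀ + 1)).val x := by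
          have e2 := tk_comp 1 k₀ x
          rw [zpow_one] at e2
          rw [e2, show (1 : ℤ) + k₀ = k₀ + 1 from add_comm 1 k₀]
        rwa [e] at h1
      have hcls : Rel C ((t ^ k₀).val x) ((t ^ (k₀ + 1)).val x) :=
        Rel.trans hT htz₀D (Rel.symm htz₀D')
      have hr1' : Rel C x ((t ^ ((1 : ℕ) : ℤ)).val x) := by
        have h1 := hrel_shift (-k₀) hcls
        rw [tk_comp, tk_comp, show -k₀ + k₀ = 0 by ring, zpow_zero] at h1
        rw [show (1 : ↥(orderAutGroup T)).val x = x from rfl] at h1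
        rw [show -k₀ + (k₀ + 1) = 1 by ring] at h1
        simpa using h1
      have : Nat.find hposex ≤ 1 := Nat.find_min' hposex ⟨one_pos, hr1'⟩
      omega
  · -- infinite case
    push_neg at hfin
    have hsep : ∀ p q : ℤ, Rel C ((t ^ p).val x) ((t ^ q).val x) → p = q := by
      intro p q h
      by_contra hpq
      have h1 := hrel_shift (-p) h
      have e1 : (t ^ (-p)).val ((t ^ p).val x) = x := by
        rw [tk_comp, show -p + p = 0 by ring, zpow_zero, oag_one_apply]
      rw [e1, tk_comp] at h1
      exact hfin (-p + q) (by omega) h1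
    -- a is supported in U
    have haxU : a.val x ∈ U := hsuppU _ (hmovea x hx)
    obtain ⟨j', hj'⟩ := haxU
    have hmapa : ∀ (k : ℤ) {z : T}, Rel C ((t ^ k).val x) z →
        Rel C ((t ^ (j' - k)).val x) (a.val z) := by
      intro k z hrel
      have h1 := (rel_map a hCa).mp hrel
      rw [hconjP k x] at h1
      have h2 := hrel_shift (-k) hj'
      rw [tk_comp] at h2
      have h3 : Rel C ((t ^ (-k + j')).val x) (a.val z) := Rel.trans hT h2 h1
      rwa [show -k + j' = j' - k by ring] at h3
    have hUa : ∀ z, z ∈ U ↔ a.val z ∈ U := by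
      intro z
      constructor
      · rintro ⟨k, hrel⟩
        exact ⟨j' - k, hmapa k hrel⟩
      · rintro ⟨k, hrel⟩
        have h1 := hmapa k hrel
        rw [haaP] at h1
        exact ⟨j' - k, h1⟩
    rcases split_a a hcenta hUgood hUa with haU | haU
    · -- a trivial on U ⊇ supp t : t and a commute, t² = 1
      apply ht2
      have hcd : t * a = a * t := by
        apply commute_of_disjoint
        intro z hz
        exact haU z (hsuppU z hz)
      have h1 : a * t * a = t := by
        calc a * t * a = a * (t * a) := by group
          _ = a * (a * t) := by rw [hcd]
          _ = (a * a) * t := by group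
          _ = t := by rw [haa, one_mul]
      rw [hata] at h1
      calc t * t = t * t⁻¹ := by rw [h1]
        _ = 1 := by group
    obtain ⟨y, hy⟩ := (oag_ne_one_iff a).mp hane
    have hyU : y ∈ U := by
      by_contra hc
      exact hy (haU y hc)
    obtain ⟨k₁, hk₁⟩ := hyU
    set P : Set T := {z | Rel C ((t ^ k₁).val x) z ∨ Rel C ((t ^ (j' - k₁)).val x) z}
      with hPdef
    have hPgood : GoodSet P := by
      constructor
      · rintro z z' (hrel | hrel) hle
        · exact Or.inl ((class_good hT hCg _).1 hrel hle)
        · exact Or.inr ((class_good hT hCg _).1 hrel hle)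
      · rintro z z' w hz hle hz' hw
        have hzC : z ∈ C := by rcases hz with h | h <;> exact h.2.1
        have hwC : w ∈ C := by rcases hw with h | h <;> exact h.2.1
        by_cases hz'C : z' ∈ C
        · exfalso
          apply hz'
          have hrel : Rel C z z' := ⟨hzC, hz'C, z', hz'C, hle, le_rfl⟩
          rcases hz with h | h
          · exact Or.inl (Rel.trans hT h hrel)
          · exact Or.inr (Rel.trans hT h hrel)
        · exact hCg.2 hzC hle hz'C hwC
    have hPa : ∀ z, z ∈ P ↔ a.val z ∈ P := by
      intro z
      constructor
      · rintro (hrel | hrel)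
        · exact Or.inr (hmapa k₁ hrel)
        · have h1 := hmapa (j' - k₁) hrel
          rw [show j' - (j' - k₁) = k₁ by ring] at h1
          exact Or.inl h1
      · rintro (hrel | hrel)
        · have h1 := hmapa k₁ hrel
          rw [haaP] at h1
          exact Or.inr h1
        · have h1 := hmapa (j' - k₁) hrel
          rw [haaP, show j' - (j' - k₁) = k₁ by ring] at h1
          exact Or.inl h1
    rcases split_a a hcenta hPgood hPa with haP | haP
    · exact hy (haP y (Or.inl hk₁))
    -- choose a shift separating P from itself
    obtain ⟨n, hn1, hn2, hn3⟩ :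
        ∃ n : ℤ, n ≠ 0 ∧ n ≠ j' - 2 * k₁ ∧ n ≠ 2 * k₁ - j' := by
      refine ⟨|j' - 2 * k₁| + 1, ?_, ?_, ?_⟩ <;>
      · have h1 := le_abs_self (j' - 2 * k₁)
        have h2 := neg_abs_le (j' - 2 * k₁)
        omega
    set a' := t ^ n * a * (t ^ n)⁻¹ with ha'def
    have hinP : ∀ z, a.val z ≠ z → z ∈ P := fun z hz => by
      by_contra hc
      exact hz (haP z hc)
    have hdisj : ∀ z, a.val z ≠ z → a'.val z = z := by
      intro z hz
      have hzP : z ∈ P := hinP z hz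
      have hwfix : a.val ((t ^ (-n)).val z) = (t ^ (-n)).val z := by
        by_contra hcw
        have hwP : (t ^ (-n)).val z ∈ P := hinP _ hcw
        have hzsh : ∀ e : ℤ, Rel C ((t ^ e).val x) ((t ^ (-n)).val z) →
            Rel C ((t ^ (n + e)).val x) z := by
          intro e hrel
          have h1 := hrel_shift n hrel
          rw [tk_comp, tk_comp, show n + -n = 0 by ring, zpow_zero] at h1
          rwa [show (1 : ↥(orderAutGroup T)).val z = z from rfl] at h1
        have key : ∀ e₁ e₂ : ℤ, Rel C ((t ^ e₁).val x) ((t ^ (-n)).val z) →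
            Rel C ((t ^ e₂).val x) z → n + e₁ = e₂ := by
          intro e₁ e₂ h1 h2
          exact hsep _ _ (Rel.trans hT (hzsh e₁ h1) (Rel.symm h2))
        rcases hwP with h1 | h1 <;> rcases hzP with h2 | h2
        · have := key _ _ h1 h2; omega
        · have := key _ _ h1 h2; omega
        · have := key _ _ h1 h2; omega
        · have := key _ _ h1 h2; omega
      rw [ha'def]
      rw [oag_mul_apply, oag_mul_apply]
      have e1 : ((t ^ n)⁻¹).val z = (t ^ (-n)).val z := by rw [← zpow_neg]
      rw [e1, hwfix]
      rw [tk_comp, show n + -n = 0 by ring, zpow_zero]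
      rfl
    have hcomm := commute_of_disjoint a a' hdisj
    have hA : a * a' = t ^ (-n) * t ^ (-n) := by
      rw [ha'def]
      calc a * (t ^ n * a * (t ^ n)⁻¹) = (a * t ^ n * a) * (t ^ n)⁻¹ := by group
        _ = t ^ (-n) * (t ^ n)⁻¹ := by rw [hconj n]
        _ = t ^ (-n) * t ^ (-n) := by rw [zpow_neg]
    have hB : a' * a = t ^ n * t ^ n := by
      rw [ha'def]
      calc t ^ n * a * (t ^ n)⁻¹ * a = t ^ n * (a * (t ^ n)⁻¹ * a) := by group
        _ = t ^ n * (a * t ^ (-n) * a) := by rw [zpow_neg]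
        _ = t ^ n * t ^ (- -n) := by rw [hconj (-n)]
        _ = t ^ n * t ^ n := by rw [neg_neg]
    rw [hA, hB] at hcomm
    have h2 : t ^ (n + n) = t ^ (-n + -n) := by
      rw [zpow_add, zpow_add, hcomm]
    have hfour : t ^ (n + n - (-n + -n)) = 1 := by
      rw [zpow_sub, h2]
      group
    have := hpow _ hfour
    omega

end Tree


end S16

/-- no tree has automorphism group abstractly isomorphic to
`Aut(Alt)`. -/
theorem stmt16 {T : Type*} [PartialOrder T] (hT : IsTree T) :
    ¬Nonempty ((orderAutGroup T) ≃* (orderAutGroup AltZ)) :=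
  S16.main ⟨hT.1, hT.2⟩
end
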